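/- arXiv:2507.10068 — 4 statements merged into one kernel-verified Lean document; each statement's English description precedes it below -/
import Mathlib

section
/- For m ≥ 3, the minimum distance of BiD(m, m−1, m−1) equals 3·2^{m−2}. -/
open Finset

abbrev F2 := ZMod 2
abbrev F4 := GaloisField 2 2

def A3 : Matrix (ZMod 3) (ZMod 3) F2 := !![1,1,1; 1,1,0; 1,0,1]

/-- The `m`-fold Kronecker power of `A3`, with rows and columns indexed by `Fin m → ZMod 3`. -/
def A3pow (m : ℕ) : Matrix (Fin m → ZMod 3) (Fin m → ZMod 3) F2 :=
  fun r c => ∏ i, A3 (r i) (c i)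

/-- The DFT coefficient at frequency `j` as an `F2`-linear functional. -/
noncomputable def dftL (m : ℕ) (α : F4) (j : Fin m → ZMod 3) :
    ((Fin m → ZMod 3) → F2) →ₗ[F2] F4 :=
  ∑ i : Fin m → ZMod 3,
    α ^ (∑ l, i l * j l).val • ((Algebra.linearMap F2 F4).comp (LinearMap.proj i))

/-- The abelian code with frequency weight set `W`. -/
noncomputable def abelianCode (m : ℕ) (α : F4) (W : Finset ℕ) :
    Submodule F2 ((Fin m → ZMod 3) → F2) :=
  ⨅ j ∈ {j : Fin m → ZMod 3 | hammingNorm j ∉ W}, LinearMap.ker (dftL m α j)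

/-- The BiD code as the span of the rows of `A3pow m` with weight in the prescribed range. -/
noncomputable def BiD (m r₁ r₂ : ℕ) : Submodule F2 ((Fin m → ZMod 3) → F2) :=
  Submodule.span F2 {a | ∃ r, (2^r₂ * 3^(m-r₂) ≤ hammingNorm (A3pow m r) ∧
    hammingNorm (A3pow m r) ≤ 2^r₁ * 3^(m-r₁)) ∧ a = A3pow m r}

/-- Minimum distance of a linear code. -/
noncomputable def minDist {m : ℕ} (C : Submodule F2 ((Fin m → ZMod 3) → F2)) : ℕ :=
  sInf {d : ℕ | ∃ a ∈ C, a ≠ 0 ∧ hammingNorm a = d}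

namespace BiDaux
lemma zmod3_cases : ∀ z : ZMod 3, z = 0 ∨ z = 1 ∨ z = 2 := by decide
def nz {m : ℕ} (r : Fin m → ZMod 3) : ℕ := #{l | r l = 0}
def glue {m : ℕ} (u v w : (Fin m → ZMod 3) → F2) : (Fin (m+1) → ZMod 3) → F2 :=
  fun x => if x 0 = 0 then u (Fin.tail x) else if x 0 = 1 then v (Fin.tail x) else w (Fin.tail x)
lemma glue_cons_zero {m : ℕ} (u v w : (Fin m → ZMod 3) → F2) (r : Fin m → ZMod 3) :
    glue u v w (Fin.cons 0 r) = u r := by simp [glue, Fin.tail_cons]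
lemma glue_cons_one {m : ℕ} (u v w : (Fin m → ZMod 3) → F2) (r : Fin m → ZMod 3) :
    glue u v w (Fin.cons 1 r) = v r := by
  have h1 : (1 : ZMod 3) ≠ 0 := by decide
  simp [glue, Fin.tail_cons, h1]
lemma glue_cons_two {m : ℕ} (u v w : (Fin m → ZMod 3) → F2) (r : Fin m → ZMod 3) :
    glue u v w (Fin.cons 2 r) = w r := by
  have h1 : (2 : ZMod 3) ≠ 0 := by decide
  have h2 : (2 : ZMod 3) ≠ 1 := by decide
  simp [glue, Fin.tail_cons, h1, h2]

-- sum over pi succ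
lemma sum_pi_succ {m : ℕ} (F : (Fin (m+1) → ZMod 3) → ℕ) :
    ∑ x : Fin (m+1) → ZMod 3, F x = ∑ j : ZMod 3, ∑ r : Fin m → ZMod 3, F (Fin.cons j r) := by
  have e := (Fin.consEquiv (fun _ : Fin (m+1) => ZMod 3)).symm
  calc ∑ x : Fin (m+1) → ZMod 3, F x
      = ∑ p : ZMod 3 × (Fin m → ZMod 3), F (Fin.cons p.1 p.2) := by
        refine Fintype.sum_equiv (Fin.consEquiv (fun _ : Fin (m+1) => ZMod 3)).symm _ _ ?_
        intro x
        simp [Fin.consEquiv, Fin.cons_self_tail]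
    _ = ∑ j : ZMod 3, ∑ r : Fin m → ZMod 3, F (Fin.cons j r) := Fintype.sum_prod_type _

lemma sum_zmod3 {M : Type*} [AddCommMonoid M] (g : ZMod 3 → M) :
    ∑ j : ZMod 3, g j = g 0 + g 1 + g 2 := by
  rw [show (univ : Finset (ZMod 3)) = {0, 1, 2} from by decide]
  rw [Finset.sum_insert (by decide), Finset.sum_insert (by decide), Finset.sum_singleton,
    add_assoc]

lemma hammingNorm_glue {m : ℕ} (u v w : (Fin m → ZMod 3) → F2) :
    hammingNorm (glue u v w) = hammingNorm u + hammingNorm v + hammingNorm w := by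
  classical
  simp only [hammingNorm, Finset.card_filter]
  rw [sum_pi_succ (fun x => if glue u v w x ≠ 0 then 1 else 0), sum_zmod3]
  simp only [glue_cons_zero, glue_cons_one, glue_cons_two]

lemma A3pow_cons {m : ℕ} (j : ZMod 3) (r : Fin m → ZMod 3) (x : Fin (m+1) → ZMod 3) :
    A3pow (m+1) (Fin.cons j r) x = A3 j (x 0) * A3pow m r (Fin.tail x) := by
  simp only [A3pow]
  rw [Fin.prod_univ_succ]
  simp [Fin.tail]

lemma A3_zero (k : ZMod 3) : A3 0 k = 1 := by revert k; decide
lemma A3_10 : A3 1 0 = 1 := by decide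
lemma A3_11 : A3 1 1 = 1 := by decide
lemma A3_12 : A3 1 2 = 0 := by decide
lemma A3_20 : A3 2 0 = 1 := by decide
lemma A3_21 : A3 2 1 = 0 := by decide
lemma A3_22 : A3 2 2 = 1 := by decide

lemma A3pow_cons_zero {m : ℕ} (r : Fin m → ZMod 3) :
    A3pow (m+1) (Fin.cons 0 r) = glue (A3pow m r) (A3pow m r) (A3pow m r) := by
  funext x
  rw [A3pow_cons, A3_zero, one_mul]
  rcases zmod3_cases (x 0) with h | h | h <;>
    simp [glue, h]

lemma A3pow_cons_one {m : ℕ} (r : Fin m → ZMod 3) :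
    A3pow (m+1) (Fin.cons 1 r) = glue (A3pow m r) (A3pow m r) 0 := by
  funext x
  rw [A3pow_cons]
  rcases zmod3_cases (x 0) with h | h | h <;>
    simp [glue, h, A3_10, A3_11, A3_12, (show ((2:ZMod 3) = 0) ↔ False by decide), (show ((2:ZMod 3) = 1) ↔ False by decide)]

lemma A3pow_cons_two {m : ℕ} (r : Fin m → ZMod 3) :
    A3pow (m+1) (Fin.cons 2 r) = glue (A3pow m r) 0 (A3pow m r) := by
  funext x
  rw [A3pow_cons]
  rcases zmod3_cases (x 0) with h | h | h <;>
    simp [glue, h, A3_20, A3_21, A3_22, (show ((2:ZMod 3) = 0) ↔ False by decide), (show ((2:ZMod 3) = 1) ↔ False by decide)]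

lemma nz_cons {m : ℕ} (j : ZMod 3) (r : Fin m → ZMod 3) :
    nz (Fin.cons j r) = (if j = 0 then 1 else 0) + nz r := by
  classical
  simp only [nz, Finset.card_filter]
  rw [Fin.sum_univ_succ]
  simp [Fin.cons_zero, Fin.cons_succ]

lemma nz_le {m : ℕ} (r : Fin m → ZMod 3) : nz r ≤ m := by
  have := Finset.card_filter_le (univ : Finset (Fin m)) (fun l => r l = 0)
  simpa [nz] using this

lemma card_A3_row_support : ∀ j : ZMod 3, #{k : ZMod 3 | A3 j k ≠ 0} = if j = 0 then 3 else 2 := by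
  decide

lemma hammingNorm_A3pow {m : ℕ} (r : Fin m → ZMod 3) :
    hammingNorm (A3pow m r) = 3 ^ (nz r) * 2 ^ (m - nz r) := by
  classical
  have hset : ({x | A3pow m r x ≠ 0} : Finset (Fin m → ZMod 3))
      = Fintype.piFinset (fun l => {k : ZMod 3 | A3 (r l) k ≠ 0}) := by
    ext x
    simp only [Finset.mem_filter, Finset.mem_univ, true_and, Fintype.mem_piFinset, A3pow]
    simp only [Finset.mem_filter, Finset.mem_univ, true_and, Finset.prod_ne_zero_iff]
    simp
  have h1 : hammingNorm (A3pow m r) = ∏ l : Fin m, #{k : ZMod 3 | A3 (r l) k ≠ 0} := by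
    rw [hammingNorm, hset, Fintype.card_piFinset]
  rw [h1]
  have h2 : ∀ l : Fin m, #{k : ZMod 3 | A3 (r l) k ≠ 0} = if r l = 0 then 3 else 2 :=
    fun l => card_A3_row_support (r l)
  simp only [h2]
  rw [Finset.prod_ite, Finset.prod_const, Finset.prod_const]
  have h3 : #{l : Fin m | r l = 0} + #{l : Fin m | ¬ (r l = 0)} = m := by
    rw [Finset.card_filter_add_card_filter_not]
    simp
  have h4 : nz r = #{l : Fin m | r l = 0} := rfl
  have h5 : #{l : Fin m | ¬ (r l = 0)} = m - nz r := by omega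
  rw [h5, ← h4]


lemma nz_eq_one_of_weight {m z : ℕ} (hm : 1 ≤ m) (hz : z ≤ m)
    (h : 3 ^ z * 2 ^ (m - z) = 2 ^ (m-1) * 3) : z = 1 := by
  rcases Nat.lt_trichotomy z 1 with h0 | h1 | h2
  · interval_cases z
    -- 2^m = 2^{m-1}*3
    exfalso
    simp only [pow_zero, one_mul, Nat.sub_zero] at h
    have hm' : m = (m-1) + 1 := by omega
    rw [hm', pow_succ] at h
    have := Nat.eq_of_mul_eq_mul_left (by positivity : 0 < 2^(m-1)) h
    omega
  · exact h1
  · exfalso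
    have h9 : (9 : ℕ) ∣ 3 ^ z := by
      have : (3:ℕ)^2 ∣ 3 ^ z := pow_dvd_pow 3 h2
      simpa using this
    have h9' : (9 : ℕ) ∣ 2 ^ (m-1) * 3 := h ▸ Dvd.dvd.mul_right h9 _
    have h3 : (3 : ℕ) ∣ 2 ^ (m-1) := by
      rcases h9' with ⟨c, hc⟩
      refine ⟨c, ?_⟩
      omega
    have := Nat.Prime.dvd_of_dvd_pow (p := 3) (by norm_num) h3
    omega

-- linear independence of rows of A3pow
def sw (z : ZMod 3) : ZMod 3 := if z = 1 then 2 else if z = 2 then 1 else 0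

lemma A3sq : ∀ r s : ZMod 3, (∑ j : ZMod 3, A3 r j * A3 j s) = if r = sw s then 1 else 0 := by
  decide

lemma A3pow_rows_linearIndependent (m : ℕ) : LinearIndependent F2 (A3pow m) := by
  refine Fintype.linearIndependent_iff.mpr ?_
  intro g hg r
  have swsw : ∀ z, sw (sw z) = z := by decide
  have h0 : ∀ i, (∑ t : Fin m → ZMod 3, g t * A3pow m t i) = 0 := by
    intro i
    have := congrFun hg i
    simpa [Finset.sum_apply] using this
  set s : Fin m → ZMod 3 := fun l => sw (r l) with hs
  have hfact : ∀ t : Fin m → ZMod 3,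
      (∑ i : Fin m → ZMod 3, A3pow m t i * A3pow m i s) = if t = r then 1 else 0 := by
    intro t
    calc ∑ i : Fin m → ZMod 3, A3pow m t i * A3pow m i s
        = ∑ i : Fin m → ZMod 3, ∏ l, (A3 (t l) (i l) * A3 (i l) (s l)) :=
          Finset.sum_congr rfl (fun i _ => by simp [A3pow, Finset.prod_mul_distrib])
      _ = ∏ l, ∑ j : ZMod 3, A3 (t l) j * A3 j (s l) :=
          (Finset.prod_univ_sum (fun _ : Fin m => (univ : Finset (ZMod 3)))
            (fun l j => A3 (t l) j * A3 j (s l))).symm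
      _ = ∏ l, (if t l = sw (s l) then (1:F2) else 0) :=
          Finset.prod_congr rfl (fun l _ => A3sq (t l) (s l))
      _ = if t = r then 1 else 0 := by
          rcases eq_or_ne t r with h | h
          · subst h; simp [hs, swsw]
          · rw [if_neg h]
            obtain ⟨l, hl⟩ : ∃ l, t l ≠ r l := by
              by_contra hc
              push_neg at hc
              exact h (funext hc)
            refine Finset.prod_eq_zero (Finset.mem_univ l) ?_
            simp [hs, swsw, hl]
  have key : (0:F2) = g r := by
    calc (0:F2) = ∑ i : Fin m → ZMod 3,
          (∑ t : Fin m → ZMod 3, g t * A3pow m t i) * A3pow m i s := by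
          simp [h0]
      _ = ∑ t : Fin m → ZMod 3, g t * ∑ i : Fin m → ZMod 3, A3pow m t i * A3pow m i s := by
          simp only [Finset.sum_mul]
          rw [Finset.sum_comm]
          simp only [mul_assoc, ← Finset.mul_sum]
      _ = ∑ t : Fin m → ZMod 3, g t * (if t = r then 1 else 0) :=
          Finset.sum_congr rfl (fun t _ => by rw [hfact t])
      _ = g r := by
          simp [mul_ite, mul_one, mul_zero, Finset.sum_ite_eq']
  exact key.symm


lemma f2_cases : ∀ a : F2, a = 0 ∨ a = 1 := by decide

noncomputable def Espan (m : ℕ) : Submodule F2 ((Fin m → ZMod 3) → F2) :=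
  Submodule.span F2 (A3pow m '' {r | nz r = 0})

noncomputable def Dspan (m : ℕ) : Submodule F2 ((Fin m → ZMod 3) → F2) :=
  Submodule.span F2 (A3pow m '' {r | nz r = 1})

noncomputable def Bspan (m : ℕ) : Submodule F2 ((Fin m → ZMod 3) → F2) :=
  Submodule.span F2 (A3pow m '' {r | nz r ≤ 1})

lemma EsubB (m : ℕ) : Espan m ≤ Bspan m :=
  Submodule.span_mono (Set.image_mono (fun r (hr : nz r = 0) => by simp [Set.mem_setOf_eq, hr]))

lemma DsubB (m : ℕ) : Dspan m ≤ Bspan m :=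
  Submodule.span_mono (Set.image_mono (fun r (hr : nz r = 1) => by simp [Set.mem_setOf_eq, hr]))

lemma ED_disjoint {m : ℕ} {x : (Fin m → ZMod 3) → F2} (hE : x ∈ Espan m) (hD : x ∈ Dspan m) :
    x = 0 := by
  have hdisj : Disjoint ({r : Fin m → ZMod 3 | nz r = 0}) ({r | nz r = 1}) := by
    rw [Set.disjoint_left]
    intro r h0 h1
    simp only [Set.mem_setOf_eq] at h0 h1
    omega
  have := (A3pow_rows_linearIndependent m).disjoint_span_image hdisj
  have h0 := Submodule.disjoint_def.mp this x hE hD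
  exact h0

lemma glue_add' {m : ℕ} (u v w u' v' w' : (Fin m → ZMod 3) → F2) :
    glue u v w + glue u' v' w' = glue (u + u') (v + v') (w + w') := by
  funext x
  simp only [glue, Pi.add_apply]
  split_ifs <;> rfl

lemma glue_zero {m : ℕ} : glue (0 : (Fin m → ZMod 3) → F2) 0 0 = 0 := by
  funext x
  simp only [glue, Pi.zero_apply]
  split_ifs <;> rfl

/-- structure lemma for Dspan -/
lemma structD {m : ℕ} {c : (Fin (m+1) → ZMod 3) → F2} (hc : c ∈ Dspan (m+1)) :
    ∃ e a b, e ∈ Espan m ∧ a ∈ Dspan m ∧ b ∈ Dspan m ∧ c = glue (e+a+b) (e+a) (e+b) := by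
  induction hc using Submodule.span_induction with
  | mem x h =>
    obtain ⟨r, hr, rfl⟩ := h
    simp only [Set.mem_setOf_eq] at hr
    have hr' : A3pow (m+1) r = A3pow (m+1) (Fin.cons (r 0) (Fin.tail r)) := by
      rw [Fin.cons_self_tail]
    have hnz : nz (Fin.cons (r 0) (Fin.tail r)) = 1 := by rw [Fin.cons_self_tail]; exact hr
    rw [nz_cons] at hnz
    rcases zmod3_cases (r 0) with h0 | h0 | h0
    · rw [h0, if_pos rfl] at hnz
      refine ⟨A3pow m (Fin.tail r), 0, 0, Submodule.subset_span ⟨_, by simp only [Set.mem_setOf_eq]; omega, rfl⟩,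
        (Dspan m).zero_mem, (Dspan m).zero_mem, ?_⟩
      rw [hr', h0, A3pow_cons_zero]
      simp
    · rw [h0, if_neg (by decide)] at hnz
      refine ⟨0, A3pow m (Fin.tail r), 0, (Espan m).zero_mem,
        Submodule.subset_span ⟨_, by simp only [Set.mem_setOf_eq]; omega, rfl⟩, (Dspan m).zero_mem, ?_⟩
      rw [hr', h0, A3pow_cons_one]
      simp
    · rw [h0, if_neg (by decide)] at hnz
      refine ⟨0, 0, A3pow m (Fin.tail r), (Espan m).zero_mem, (Dspan m).zero_mem,
        Submodule.subset_span ⟨_, by simp only [Set.mem_setOf_eq]; omega, rfl⟩, ?_⟩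
      rw [hr', h0, A3pow_cons_two]
      simp
  | zero => exact ⟨0, 0, 0, (Espan m).zero_mem, (Dspan m).zero_mem, (Dspan m).zero_mem,
      by simp [glue_zero]⟩
  | add x y hx hy ihx ihy =>
    obtain ⟨e, a, b, he, ha, hb, rfl⟩ := ihx
    obtain ⟨e', a', b', he', ha', hb', rfl⟩ := ihy
    refine ⟨e+e', a+a', b+b', (Espan m).add_mem he he', (Dspan m).add_mem ha ha',
      (Dspan m).add_mem hb hb', ?_⟩
    rw [glue_add']
    congr 1 <;> abel
  | smul t x hx ihx =>
    rcases f2_cases t with h | h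
    · subst h
      exact ⟨0, 0, 0, (Espan m).zero_mem, (Dspan m).zero_mem, (Dspan m).zero_mem,
        by simp [glue_zero]⟩
    · subst h
      simpa using ihx

/-- structure lemma for Bspan -/
lemma structB {m : ℕ} {c : (Fin (m+1) → ZMod 3) → F2} (hc : c ∈ Bspan (m+1)) :
    ∃ e a b, e ∈ Espan m ∧ a ∈ Bspan m ∧ b ∈ Bspan m ∧ c = glue (e+a+b) (e+a) (e+b) := by
  induction hc using Submodule.span_induction with
  | mem x h =>
    obtain ⟨r, hr, rfl⟩ := h
    simp only [Set.mem_setOf_eq] at hr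
    have hr' : A3pow (m+1) r = A3pow (m+1) (Fin.cons (r 0) (Fin.tail r)) := by
      rw [Fin.cons_self_tail]
    have hnz : nz (Fin.cons (r 0) (Fin.tail r)) ≤ 1 := by rw [Fin.cons_self_tail]; exact hr
    rw [nz_cons] at hnz
    rcases zmod3_cases (r 0) with h0 | h0 | h0
    · rw [h0, if_pos rfl] at hnz
      refine ⟨A3pow m (Fin.tail r), 0, 0, Submodule.subset_span ⟨_, by simp only [Set.mem_setOf_eq]; omega, rfl⟩,
        (Bspan m).zero_mem, (Bspan m).zero_mem, ?_⟩
      rw [hr', h0, A3pow_cons_zero]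
      simp
    · rw [h0, if_neg (by decide)] at hnz
      refine ⟨0, A3pow m (Fin.tail r), 0, (Espan m).zero_mem,
        Submodule.subset_span ⟨_, by simp only [Set.mem_setOf_eq]; omega, rfl⟩, (Bspan m).zero_mem, ?_⟩
      rw [hr', h0, A3pow_cons_one]
      simp
    · rw [h0, if_neg (by decide)] at hnz
      refine ⟨0, 0, A3pow m (Fin.tail r), (Espan m).zero_mem, (Bspan m).zero_mem,
        Submodule.subset_span ⟨_, by simp only [Set.mem_setOf_eq]; omega, rfl⟩, ?_⟩
      rw [hr', h0, A3pow_cons_two]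
      simp
  | zero => exact ⟨0, 0, 0, (Espan m).zero_mem, (Bspan m).zero_mem, (Bspan m).zero_mem,
      by simp [glue_zero]⟩
  | add x y hx hy ihx ihy =>
    obtain ⟨e, a, b, he, ha, hb, rfl⟩ := ihx
    obtain ⟨e', a', b', he', ha', hb', rfl⟩ := ihy
    refine ⟨e+e', a+a', b+b', (Espan m).add_mem he he', (Bspan m).add_mem ha ha',
      (Bspan m).add_mem hb hb', ?_⟩
    rw [glue_add']
    congr 1 <;> abel
  | smul t x hx ihx =>
    rcases f2_cases t with h | h
    · subst h
      exact ⟨0, 0, 0, (Espan m).zero_mem, (Bspan m).zero_mem, (Bspan m).zero_mem,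
        by simp [glue_zero]⟩
    · subst h
      simpa using ihx

/-- structure lemma for Espan -/
lemma structE {m : ℕ} {c : (Fin (m+1) → ZMod 3) → F2} (hc : c ∈ Espan (m+1)) :
    ∃ a b, a ∈ Espan m ∧ b ∈ Espan m ∧ c = glue (a+b) a b := by
  induction hc using Submodule.span_induction with
  | mem x h =>
    obtain ⟨r, hr, rfl⟩ := h
    simp only [Set.mem_setOf_eq] at hr
    have hr' : A3pow (m+1) r = A3pow (m+1) (Fin.cons (r 0) (Fin.tail r)) := by
      rw [Fin.cons_self_tail]
    have hnz : nz (Fin.cons (r 0) (Fin.tail r)) = 0 := by rw [Fin.cons_self_tail]; exact hr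
    rw [nz_cons] at hnz
    rcases zmod3_cases (r 0) with h0 | h0 | h0
    · rw [h0, if_pos rfl] at hnz; omega
    · rw [h0, if_neg (by decide)] at hnz
      refine ⟨A3pow m (Fin.tail r), 0, Submodule.subset_span ⟨_, by simp only [Set.mem_setOf_eq]; omega, rfl⟩,
        (Espan m).zero_mem, ?_⟩
      rw [hr', h0, A3pow_cons_one]
      simp
    · rw [h0, if_neg (by decide)] at hnz
      refine ⟨0, A3pow m (Fin.tail r), (Espan m).zero_mem,
        Submodule.subset_span ⟨_, by simp only [Set.mem_setOf_eq]; omega, rfl⟩, ?_⟩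
      rw [hr', h0, A3pow_cons_two]
      simp
  | zero => exact ⟨0, 0, (Espan m).zero_mem, (Espan m).zero_mem, by simp [glue_zero]⟩
  | add x y hx hy ihx ihy =>
    obtain ⟨a, b, ha, hb, rfl⟩ := ihx
    obtain ⟨a', b', ha', hb', rfl⟩ := ihy
    refine ⟨a+a', b+b', (Espan m).add_mem ha ha', (Espan m).add_mem hb hb', ?_⟩
    rw [glue_add']
    congr 1
    abel
  | smul t x hx ihx =>
    rcases f2_cases t with h | h
    · subst h
      exact ⟨0, 0, (Espan m).zero_mem, (Espan m).zero_mem, by simp [glue_zero]⟩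
    · subst h
      simpa using ihx


lemma addF2 {m : ℕ} (u v : (Fin m → ZMod 3) → F2) (h : u + v = 0) : u = v := by
  funext i
  have h2 := congrFun h i
  simp only [Pi.add_apply, Pi.zero_apply] at h2
  rcases f2_cases (u i) with h3 | h3 <;> rcases f2_cases (v i) with h4 | h4 <;>
    rw [h3, h4] at h2 ⊢ <;> first | rfl | (exfalso; revert h2; decide)

lemma norm_pos {m : ℕ} {c : (Fin m → ZMod 3) → F2} (hc : c ≠ 0) : 1 ≤ hammingNorm c :=
  hammingNorm_pos_iff.mpr hc

lemma lemE : ∀ m : ℕ, ∀ c ∈ Espan m, c ≠ 0 → 2^m ≤ hammingNorm c := by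
  intro m
  induction m with
  | zero => intro c _ hc0; simpa using norm_pos hc0
  | succ m ih =>
    intro c hc hc0
    obtain ⟨a, b, ha, hb, rfl⟩ := structE hc
    rw [hammingNorm_glue]
    have hpow : 2^(m+1) = 2^m + 2^m := by ring
    by_cases ha0 : a = 0
    · have hb0 : b ≠ 0 := fun h => hc0 (by rw [ha0, h]; simpa using glue_zero)
      have h1 := ih b hb hb0
      rw [ha0]
      simp only [zero_add, hammingNorm_zero, add_zero]
      omega
    · by_cases hb0 : b = 0
      · have h1 := ih a ha ha0
        rw [hb0]
        simp only [add_zero, hammingNorm_zero]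
        omega
      · have h1 := ih a ha ha0
        have h2 := ih b hb hb0
        omega

lemma lemB : ∀ m : ℕ, ∀ c ∈ Bspan m, c ≠ 0 → 2^m ≤ 2 * hammingNorm c := by
  intro m
  induction m with
  | zero => intro c _ hc0; have := norm_pos hc0; simpa using by omega
  | succ m ih =>
    intro c hc hc0
    obtain ⟨e, a, b, he, ha, hb, rfl⟩ := structB hc
    rw [hammingNorm_glue]
    have hpow : 2^(m+1) = 2^m + 2^m := by ring
    have hxB : e + a + b ∈ Bspan m := (Bspan m).add_mem ((Bspan m).add_mem (EsubB m he) ha) hb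
    have hyB : e + a ∈ Bspan m := (Bspan m).add_mem (EsubB m he) ha
    have hzB : e + b ∈ Bspan m := (Bspan m).add_mem (EsubB m he) hb
    by_cases hy : e + a = 0
    · have hae : e = a := addF2 _ _ hy
      by_cases hz : e + b = 0
      · have hbe : e = b := addF2 _ _ hz
        have hx' : e + a + b = e := by rw [hy, zero_add, ← hbe]
        have he0 : e ≠ 0 := by
          intro h
          apply hc0
          rw [hx', hy, hz, h]
          simpa using glue_zero
        have h1 := lemE m e he he0
        rw [hx', hy, hz]
        simp only [hammingNorm_zero, add_zero]
        omega
      · -- z ≠ 0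
        have hx' : e + a + b = b := by rw [hy, zero_add]
        by_cases hb0 : b = 0
        · have hz' : e + b = e := by rw [hb0, add_zero]
          have he0 : e ≠ 0 := fun h => hz (by rw [hz', h])
          have h1 := lemE m e he he0
          rw [hx', hy, hz', hb0]
          simp only [hammingNorm_zero, add_zero, zero_add]
          omega
        · have h1 := ih b hb hb0
          have h2 := ih _ hzB hz
          rw [hx', hy]
          simp only [hammingNorm_zero, add_zero, zero_add]
          omega
    · -- y ≠ 0
      have h1 := ih _ hyB hy
      by_cases hz : e + b = 0
      · have hbe : e = b := addF2 _ _ hz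
        by_cases hx : e + a + b = 0
        · -- x = 0 : then e+a = b = e, components (0, y, 0), y = b = e
          have hyb : e + a = b := addF2 _ _ hx
          have h2 := lemE m e he (by intro h; apply hy; rw [hyb, ← hbe, h])
          rw [hx, hz, hyb, ← hbe]
          simp only [hammingNorm_zero, add_zero, zero_add]
          omega
        · have h2 := ih _ hxB hx
          omega
      · have h2 := ih _ hzB hz
        omega

lemma lemD : ∀ m : ℕ, ∀ c ∈ Dspan m, c ≠ 0 → 3 * 2^m ≤ 4 * hammingNorm c := by
  intro m
  induction m with
  | zero => intro c _ hc0; have := norm_pos hc0; simpa using by omega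
  | succ m ih =>
    intro c hc hc0
    obtain ⟨e, a, b, he, ha, hb, rfl⟩ := structD hc
    rw [hammingNorm_glue]
    have hpow : 2^(m+1) = 2^m + 2^m := by ring
    by_cases hy : e + a = 0
    · -- e = a ∈ E ∩ D = 0
      have hae : e = a := addF2 _ _ hy
      have he0 : e = 0 := ED_disjoint he (hae ▸ ha)
      have ha0 : a = 0 := by rw [← hae, he0]
      have hb0 : b ≠ 0 := by
        intro h
        apply hc0
        rw [he0, ha0, h]
        simpa using glue_zero
      have h1 := ih b hb hb0
      rw [he0, ha0]
      simp only [zero_add, hammingNorm_zero, add_zero]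
      omega
    · by_cases hz : e + b = 0
      · have hbe : e = b := addF2 _ _ hz
        have he0 : e = 0 := ED_disjoint he (hbe ▸ hb)
        have hb0 : b = 0 := by rw [← hbe, he0]
        have ha0 : a ≠ 0 := by intro h; apply hy; rw [he0, h, add_zero]
        have h1 := ih a ha ha0
        rw [he0, hb0]
        simp only [zero_add, add_zero, hammingNorm_zero]
        omega
      · by_cases hx : e + a + b = 0
        · -- y = b, z = a
          have hyb : e + a = b := addF2 _ _ hx
          have hza : e + b = a := by
            have h' : (e + b) + a = 0 := by rw [← hx]; abel
            exact addF2 _ _ h'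
          have hb0 : b ≠ 0 := by rw [← hyb]; exact hy
          have ha0 : a ≠ 0 := by rw [← hza]; exact hz
          have h1 := ih a ha ha0
          have h2 := ih b hb hb0
          rw [hx, hyb, hza]
          simp only [hammingNorm_zero, zero_add]
          omega
        · have hxB : e + a + b ∈ Bspan m :=
            (Bspan m).add_mem ((Bspan m).add_mem (EsubB m he) (DsubB m ha)) (DsubB m hb)
          have hyB : e + a ∈ Bspan m := (Bspan m).add_mem (EsubB m he) (DsubB m ha)
          have hzB : e + b ∈ Bspan m := (Bspan m).add_mem (EsubB m he) (DsubB m hb)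
          have h1 := lemB m _ hxB hx
          have h2 := lemB m _ hyB hy
          have h3 := lemB m _ hzB hz
          omega


lemma extend_mem {m : ℕ} {f : (Fin m → ZMod 3) → F2} (hf : f ∈ Dspan m) :
    glue f f 0 ∈ Dspan (m+1) := by
  induction hf using Submodule.span_induction with
  | mem x h =>
    obtain ⟨r, hr, rfl⟩ := h
    simp only [Set.mem_setOf_eq] at hr
    have : glue (A3pow m r) (A3pow m r) 0 = A3pow (m+1) (Fin.cons 1 r) := by
      rw [A3pow_cons_one]
    rw [this]
    refine Submodule.subset_span ⟨Fin.cons 1 r, ?_, rfl⟩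
    simp only [Set.mem_setOf_eq, nz_cons, hr]
    decide
  | zero =>
    rw [glue_zero]
    exact (Dspan (m+1)).zero_mem
  | add x y hx hy ihx ihy =>
    have : glue (x + y) (x + y) 0 = glue x x 0 + glue y y 0 := by
      rw [glue_add', add_zero]
    rw [this]
    exact (Dspan (m+1)).add_mem ihx ihy
  | smul t x hx ihx =>
    rcases f2_cases t with h | h
    · subst h
      simp only [zero_smul]
      rw [glue_zero]
      exact (Dspan (m+1)).zero_mem
    · subst h
      simpa using ihx

def w3 : (Fin 3 → ZMod 3) → F2 :=
  A3pow 3 ![0,1,2] + A3pow 3 ![0,2,1] + A3pow 3 ![1,0,2] + A3pow 3 ![2,0,1]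
    + A3pow 3 ![1,2,0] + A3pow 3 ![2,1,0]

set_option maxRecDepth 10000 in
lemma w3_norm : hammingNorm w3 = 6 := by decide

lemma w3_mem : w3 ∈ Dspan 3 := by
  have hmem : ∀ r : Fin 3 → ZMod 3, nz r = 1 → A3pow 3 r ∈ Dspan 3 :=
    fun r hr => Submodule.subset_span ⟨r, hr, rfl⟩
  refine (Dspan 3).add_mem ((Dspan 3).add_mem ((Dspan 3).add_mem ((Dspan 3).add_mem
    ((Dspan 3).add_mem (hmem _ ?_) (hmem _ ?_)) (hmem _ ?_)) (hmem _ ?_)) (hmem _ ?_))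
    (hmem _ ?_) <;> decide

lemma witness_all : ∀ k : ℕ, ∃ c, c ∈ Dspan (3+k) ∧ c ≠ 0 ∧ hammingNorm c = 6 * 2^k := by
  intro k
  induction k with
  | zero =>
    refine ⟨w3, w3_mem, ?_, by simpa using w3_norm⟩
    intro h
    have := w3_norm
    rw [h] at this
    simp at this
  | succ k ih =>
    obtain ⟨c, hc, hc0, hnorm⟩ := ih
    refine ⟨glue c c 0, extend_mem hc, ?_, ?_⟩
    · intro h
      apply hc0
      funext r
      have := congrFun h (Fin.cons 0 r)
      rw [glue_cons_zero] at this
      exact this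
    · rw [hammingNorm_glue, hnorm, hammingNorm_zero]
      ring

end BiDaux

lemma BiD_eq_Dspan {m : ℕ} (hm : 1 ≤ m) : BiD m (m-1) (m-1) = BiDaux.Dspan m := by
  unfold BiD BiDaux.Dspan
  congr 1
  ext c
  simp only [Set.mem_setOf_eq, Set.mem_image]
  constructor
  · rintro ⟨r, ⟨h1, h2⟩, rfl⟩
    refine ⟨r, ?_, rfl⟩
    have hw : hammingNorm (A3pow m r) = 2^(m-1) * 3^(m-(m-1)) := le_antisymm h2 h1
    rw [BiDaux.hammingNorm_A3pow] at hw
    have hmm : m - (m-1) = 1 := by omega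
    rw [hmm, pow_one] at hw
    exact BiDaux.nz_eq_one_of_weight hm (BiDaux.nz_le r) hw
  · rintro ⟨r, hr, rfl⟩
    have hr' : BiDaux.nz r = 1 := hr
    refine ⟨r, ⟨?_, ?_⟩, rfl⟩ <;>
    · rw [BiDaux.hammingNorm_A3pow, hr', pow_one, show m - (m-1) = 1 by omega, pow_one,
        mul_comm]

/-- For `m ≥ 3`, the minimum distance of `BiD(m, m-1, m-1)` equals `3·2^(m-2)`. -/
theorem BiD_m_sub_one_minDist (m : ℕ) (hm : 3 ≤ m) :
    IsLeast {d : ℕ | ∃ a ∈ BiD m (m-1) (m-1), a ≠ 0 ∧ hammingNorm a = d} (3 * 2^(m-2)) := by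
  obtain ⟨k, rfl⟩ : ∃ k, m = 3 + k := ⟨m - 3, by omega⟩
  have hm1 : (1:ℕ) ≤ 3 + k := by omega
  constructor
  · obtain ⟨c, hc, hc0, hnorm⟩ := BiDaux.witness_all k
    refine ⟨c, ?_, hc0, ?_⟩
    · rw [BiD_eq_Dspan hm1]
      exact hc
    · rw [hnorm, show 3 + k - 2 = k + 1 by omega, pow_succ]
      ring
  · rintro d ⟨a, haBiD, ha0, rfl⟩
    rw [BiD_eq_Dspan hm1] at haBiD
    have h := BiDaux.lemD (3+k) a haBiD ha0
    have he : (3:ℕ) * 2^(3+k) = 4 * (3 * 2^(k+1)) := by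
      rw [pow_add, pow_succ]
      ring
    rw [show 3 + k - 2 = k + 1 by omega]
    omega
end

section
/- Let G_{m,e} be the submatrix of A₃^{⊗m} consisting of rows with Hamming weight 2^w·3^{m−w} for even w, and G_{m,o} for odd w. Then the sum over F₂ of all rows of G_{m,e} has Hamming weight 2m+1, and the sum of all rows of G_{m,o} has Hamming weight 2m, for every m ≥ 1. -/
open Finset

-- Auxiliary lemmas
lemma col_sum : ∀ y : ZMod 3, ∑ x : ZMod 3, A3 x y = if y = 0 then 1 else 0 := by decide
lemma col_sum_nz : ∀ y : ZMod 3, ∑ x ∈ univ.filter (· ≠ 0), A3 x y = if y = 0 then 0 else 1 := by decide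
lemma row_card : ∀ x : ZMod 3, (univ.filter (fun y => A3 x y ≠ 0)).card = if x = 0 then 3 else 2 := by decide

lemma rowWeight (m : ℕ) (r : Fin m → ZMod 3) :
    hammingNorm (A3pow m r) = 2^(hammingNorm r) * 3^(m - hammingNorm r) := by
  classical
  have h1 : (univ.filter fun c : Fin m → ZMod 3 => A3pow m r c ≠ 0)
      = Fintype.piFinset (fun i => univ.filter fun y => A3 (r i) y ≠ 0) := by
    ext c
    simp [A3pow, Finset.prod_eq_zero_iff]
  have h2 : hammingNorm (A3pow m r)
      = ∏ i, (univ.filter fun y => A3 (r i) y ≠ 0).card := by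
    rw [hammingNorm, h1, Fintype.card_piFinset]
  rw [h2]
  simp_rw [row_card]
  rw [Finset.prod_ite, Finset.prod_const, Finset.prod_const]
  have hc : (univ.filter fun i => ¬ r i = 0).card = hammingNorm r := rfl
  have hc2 : (univ.filter fun i => r i = 0).card = m - hammingNorm r := by
    have := Finset.card_filter_add_card_filter_not (s := (univ : Finset (Fin m)))
      (p := fun i => r i = 0)
    simp only [Finset.card_univ, Fintype.card_fin] at this
    omega
  rw [hc, hc2, mul_comm]

lemma pow23_inj {a b c d : ℕ} (h : 2^a * 3^b = 2^c * 3^d) : a = c := by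
  have := congrArg (fun n => n.factorization 2) h
  have h3 : (Nat.factorization 3) 2 = 0 := by
    simp [Nat.Prime.factorization Nat.prime_three]
  simpa [Nat.factorization_mul, Nat.Prime.factorization_pow, pow_ne_zero, h3, Nat.Prime.factorization_self Nat.prime_two] using this

open scoped Classical in
lemma filter_char (m : ℕ) (P : ℕ → Prop) [DecidablePred P] :
    (univ.filter (fun r : Fin m → ZMod 3 =>
      ∃ w, P w ∧ hammingNorm (A3pow m r) = 2^w * 3^(m-w)))
    = univ.filter (fun r => P (hammingNorm r)) := by
  classical
  ext r
  simp only [mem_filter, mem_univ, true_and, rowWeight]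
  constructor
  · rintro ⟨w, hw, he⟩
    rw [pow23_inj he]; exact hw
  · intro h; exact ⟨hammingNorm r, h, rfl⟩

lemma col_sum_nz' : ∀ y : ZMod 3,
    ∑ x : ZMod 3, (if x = 0 then 0 else A3 x y) = if y = 0 then 0 else 1 := by decide

lemma sum_all (m : ℕ) (c : Fin m → ZMod 3) :
    ∑ r : Fin m → ZMod 3, ∏ i, A3 (r i) (c i) = if c = 0 then 1 else 0 := by
  classical
  rw [← Fintype.piFinset_univ,
    ← Finset.prod_univ_sum (fun _ => (univ : Finset (ZMod 3))) (fun i x => A3 x (c i))]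
  simp_rw [col_sum]
  rw [Finset.prod_boole]
  congr 1
  simp [funext_iff, eq_iff_iff]

lemma key (m : ℕ) (c : Fin m → ZMod 3) (i : Fin m) :
    ∑ r : Fin m → ZMod 3, (if r i = 0 then 0 else 1) * ∏ j, A3 (r j) (c j)
    = (if c i = 0 then 0 else 1) * ∏ j ∈ univ.erase i, (if c j = 0 then (1:F2) else 0) := by
  classical
  set g : Fin m → ZMod 3 → F2 :=
    fun j x => if j = i then (if x = 0 then 0 else A3 x (c j)) else A3 x (c j) with hg
  have step1 : ∀ r : Fin m → ZMod 3,
      (if r i = 0 then 0 else 1) * ∏ j, A3 (r j) (c j) = ∏ j, g j (r j) := by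
    intro r
    rw [← Finset.mul_prod_erase univ (fun j => g j (r j)) (mem_univ i),
        ← Finset.mul_prod_erase univ (fun j => A3 (r j) (c j)) (mem_univ i), ← mul_assoc]
    congr 1
    · simp only [hg, if_pos rfl]
      split <;> simp [*]
    · apply Finset.prod_congr rfl; intro j hj; simp [hg, (Finset.mem_erase.mp hj).1]
  simp_rw [step1]
  have step2 : ∑ r : Fin m → ZMod 3, ∏ j, g j (r j) = ∏ j, ∑ x : ZMod 3, g j x := by
    rw [← Fintype.piFinset_univ,
      ← Finset.prod_univ_sum (fun _ => (univ : Finset (ZMod 3))) (fun j x => g j x)]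
  rw [step2, ← Finset.mul_prod_erase univ _ (mem_univ i)]
  congr 1
  · simp only [hg, if_pos rfl]
    exact col_sum_nz' (c i)
  · apply Finset.prod_congr rfl; intro j hj
    simp only [hg, (Finset.mem_erase.mp hj).1, if_false]
    exact col_sum (c j)

open scoped Classical in
lemma sum_odd (m : ℕ) (c : Fin m → ZMod 3) :
    ∑ r ∈ univ.filter (fun r : Fin m → ZMod 3 => Odd (hammingNorm r)), ∏ i, A3 (r i) (c i)
    = if hammingNorm c = 1 then 1 else 0 := by
  classical
  have h1 : ∑ r ∈ univ.filter (fun r : Fin m → ZMod 3 => Odd (hammingNorm r)),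
        ∏ i, A3 (r i) (c i)
      = ∑ r : Fin m → ZMod 3, (hammingNorm r : F2) * ∏ i, A3 (r i) (c i) := by
    rw [Finset.sum_filter]
    apply Finset.sum_congr rfl
    intro r _
    rcases Nat.even_or_odd (hammingNorm r) with he | ho
    · rw [if_neg (Nat.not_odd_iff_even.mpr he)]
      have hz : ((hammingNorm r : ℕ) : F2) = 0 := by
        rw [ZMod.natCast_eq_zero_iff]
        exact he.two_dvd
      rw [hz, zero_mul]
    · rw [if_pos ho]
      obtain ⟨k, hk⟩ := ho
      have hm : (2*k+1) % 2 = 1 := by omega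
      have ho1 : ((hammingNorm r : ℕ) : F2) = 1 := by
        rw [hk, ← ZMod.natCast_mod, hm, Nat.cast_one]
      rw [ho1, one_mul]
  have h2 : ∀ r : Fin m → ZMod 3,
      ((hammingNorm r : ℕ) : F2) = ∑ i, (if r i = 0 then 0 else 1) := by
    intro r
    rw [hammingNorm, Finset.card_filter]
    push_cast
    apply Finset.sum_congr rfl
    intro i _
    split <;> simp_all
  rw [h1]
  simp_rw [h2, Finset.sum_mul]
  rw [Finset.sum_comm]
  simp_rw [key, Finset.prod_boole]
  have hterm : ∀ i : Fin m,
      (if c i = 0 then (0:F2) else 1) * (if ∀ j ∈ univ.erase i, c j = 0 then 1 else 0)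
      = if (¬ c i = 0 ∧ ∀ j ∈ univ.erase i, c j = 0) then 1 else 0 := by
    intro i
    by_cases h1 : c i = 0 <;> by_cases h2 : ∀ j ∈ univ.erase i, c j = 0 <;> simp [h1, h2]
  have hcond : ∀ i : Fin m,
      (¬ c i = 0 ∧ ∀ j ∈ univ.erase i, c j = 0) → univ.filter (fun j => c j ≠ 0) = {i} := by
    intro i
    rintro ⟨ha, hb⟩
    ext j
    simp only [Finset.mem_filter, Finset.mem_univ, true_and, Finset.mem_singleton]
    constructor
    · intro hj
      by_contra hne
      exact hj (hb j (Finset.mem_erase.mpr ⟨hne, Finset.mem_univ j⟩))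
    · rintro rfl; exact ha
  have hnorm : hammingNorm c = (univ.filter (fun j => c j ≠ 0)).card := rfl
  by_cases hc : hammingNorm c = 1
  · rw [if_pos hc]
    rw [hnorm] at hc
    obtain ⟨i0, hi0⟩ := Finset.card_eq_one.mp hc
    have hmem : i0 ∈ univ.filter (fun j => c j ≠ 0) := hi0 ▸ Finset.mem_singleton_self i0
    have h1 : ¬ c i0 = 0 := by simpa using hmem
    have h2 : ∀ j ∈ univ.erase i0, c j = 0 := by
      intro j hj
      by_contra hne
      have : j ∈ univ.filter (fun j => c j ≠ 0) := by simp [hne]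
      rw [hi0, Finset.mem_singleton] at this
      exact (Finset.mem_erase.mp hj).1 this
    rw [Finset.sum_eq_single i0]
    · rw [if_neg h1, if_pos h2, one_mul]
    · intro i _ hne
      by_cases hci : c i = 0
      · rw [if_pos hci, zero_mul]
      · exfalso
        have : i ∈ univ.filter (fun j => c j ≠ 0) := by simp [hci]
        rw [hi0, Finset.mem_singleton] at this
        exact hne this
    · intro h; exact absurd (Finset.mem_univ i0) h
  · rw [if_neg hc]
    apply Finset.sum_eq_zero
    intro i _
    by_cases hci : c i = 0
    · rw [if_pos hci, zero_mul]
    · by_cases h2 : ∀ j ∈ univ.erase i, c j = 0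
      · exact absurd (by rw [hnorm, hcond i ⟨hci, h2⟩, Finset.card_singleton]) hc
      · rw [if_neg h2, mul_zero]

open scoped Classical in
lemma sum_even (m : ℕ) (c : Fin m → ZMod 3) :
    ∑ r ∈ univ.filter (fun r : Fin m → ZMod 3 => Even (hammingNorm r)), ∏ i, A3 (r i) (c i)
    = (if c = 0 then 1 else 0) + (if hammingNorm c = 1 then 1 else 0) := by
  classical
  have hsplit := Finset.sum_filter_add_sum_filter_not univ
    (fun r : Fin m → ZMod 3 => Even (hammingNorm r)) (fun r => ∏ i, A3 (r i) (c i))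
  have hne : univ.filter (fun r : Fin m → ZMod 3 => ¬ Even (hammingNorm r))
      = univ.filter (fun r => Odd (hammingNorm r)) := by
    apply Finset.filter_congr
    intro r _
    simp [Nat.not_even_iff_odd]
  rw [hne, sum_odd, sum_all] at hsplit
  have hchar : ∀ x : F2, x + x = 0 := by decide
  calc ∑ r ∈ univ.filter (fun r : Fin m → ZMod 3 => Even (hammingNorm r)), ∏ i, A3 (r i) (c i)
      = (∑ r ∈ univ.filter (fun r : Fin m → ZMod 3 => Even (hammingNorm r)), ∏ i, A3 (r i) (c i))
        + ((if hammingNorm c = 1 then 1 else 0) + (if hammingNorm c = 1 then 1 else 0)) := by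
        rw [hchar, add_zero]
    _ = (if c = 0 then 1 else 0) + (if hammingNorm c = 1 then 1 else 0) := by
        rw [← add_assoc, hsplit]

open scoped Classical in
lemma count1 (m : ℕ) :
    (univ.filter (fun c : Fin m → ZMod 3 => hammingNorm c = 1)).card = 2*m := by
  classical
  have hprod : ((univ : Finset (Fin m × ZMod 3)).filter (fun p => p.2 ≠ 0)).card = 2*m := by
    rw [show ((univ : Finset (Fin m × ZMod 3)).filter fun p => p.2 ≠ 0)
        = univ ×ˢ (univ.filter (· ≠ 0)) from by ext p; simp [Finset.mem_product]]
    rw [Finset.card_product, Finset.card_univ, Fintype.card_fin]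
    rw [show (univ.filter (fun x : ZMod 3 => x ≠ 0)).card = 2 from by decide]
    ring
  rw [← hprod]
  apply Eq.symm
  apply Finset.card_bij (fun (p : Fin m × ZMod 3) _ => Function.update (0 : Fin m → ZMod 3) p.1 p.2)
  · rintro ⟨i, x⟩ hp
    simp only [Finset.mem_filter, Finset.mem_univ, true_and] at hp ⊢
    have hfil : univ.filter (fun j => Function.update (0 : Fin m → ZMod 3) i x j ≠ 0) = {i} := by
      ext j
      simp only [Finset.mem_filter, Finset.mem_univ, true_and, Finset.mem_singleton]
      by_cases hj : j = i
      · subst hj; simp [Function.update_self, hp]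
      · simp [Function.update_of_ne hj, hj]
    show (univ.filter (fun j => Function.update (0 : Fin m → ZMod 3) i x j ≠ 0)).card = 1
    rw [hfil, Finset.card_singleton]
  · rintro ⟨i, x⟩ hp ⟨i', x'⟩ hp' h
    simp only [Finset.mem_filter, Finset.mem_univ, true_and] at hp hp'
    have hi : i = i' := by
      by_contra hne
      have := congrFun h i
      rw [Function.update_self, Function.update_of_ne (Ne.symm ?_)] at this
      · exact hp this
      · exact fun hh => hne hh.symm
    subst hi
    have := congrFun h i
    rw [Function.update_self, Function.update_self] at this
    simp only [Prod.mk.injEq]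
    exact ⟨trivial, this⟩
  · intro c hc
    simp only [Finset.mem_filter, Finset.mem_univ, true_and] at hc
    have hc' : (univ.filter (fun j => c j ≠ 0)).card = 1 := hc
    obtain ⟨i0, hi0⟩ := Finset.card_eq_one.mp hc'
    have hmem : i0 ∈ univ.filter (fun j => c j ≠ 0) := hi0 ▸ Finset.mem_singleton_self i0
    have h1 : c i0 ≠ 0 := by simpa using hmem
    refine ⟨⟨i0, c i0⟩, by simp [h1], ?_⟩
    funext j
    by_cases hj : j = i0
    · subst hj; simp [Function.update_self]
    · rw [Function.update_of_ne hj]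
      by_contra hne
      have : j ∈ univ.filter (fun j => c j ≠ 0) := by simp; exact fun h => hne h.symm
      rw [hi0, Finset.mem_singleton] at this
      exact hj this

open scoped Classical in
/-- The sum over `F2` of all rows of `A3pow m` of weight `2^w·3^(m-w)` with `w` even has
Hamming weight `2m+1`, and with `w` odd has Hamming weight `2m`, for all `m ≥ 1`. -/
theorem sum_even_odd_rows_weight (m : ℕ) (hm : 1 ≤ m) :
    hammingNorm (∑ r ∈ Finset.univ.filter (fun r : Fin m → ZMod 3 =>
        ∃ w, Even w ∧ hammingNorm (A3pow m r) = 2^w * 3^(m-w)), A3pow m r) = 2*m + 1 ∧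
    hammingNorm (∑ r ∈ Finset.univ.filter (fun r : Fin m → ZMod 3 =>
        ∃ w, Odd w ∧ hammingNorm (A3pow m r) = 2^w * 3^(m-w)), A3pow m r) = 2*m := by
  classical
  constructor
  · rw [filter_char m Even]
    have hfun : (∑ r ∈ univ.filter (fun r : Fin m → ZMod 3 => Even (hammingNorm r)), A3pow m r)
        = fun c => (if c = 0 then (1:F2) else 0) + (if hammingNorm c = 1 then 1 else 0) := by
      funext c
      erw [Finset.sum_apply]
      exact sum_even m c
    refine (congrArg hammingNorm hfun).trans ?_
    have hset : (univ.filter (fun c : Fin m → ZMod 3 =>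
        ((if c = 0 then (1:F2) else 0) + (if hammingNorm c = 1 then 1 else 0)) ≠ 0))
        = insert (0 : Fin m → ZMod 3) (univ.filter (fun c => hammingNorm c = 1)) := by
      ext c
      simp only [Finset.mem_filter, Finset.mem_univ, true_and, Finset.mem_insert]
      by_cases h0 : c = 0
      · subst h0
        have : hammingNorm (0 : Fin m → ZMod 3) = 0 := hammingNorm_zero
        simp [this]
      · by_cases h1 : hammingNorm c = 1 <;> simp [h0, h1]
    rw [show hammingNorm (fun c : Fin m → ZMod 3 =>
          (if c = 0 then (1:F2) else 0) + (if hammingNorm c = 1 then 1 else 0))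
        = (univ.filter (fun c : Fin m → ZMod 3 =>
            ((if c = 0 then (1:F2) else 0) + (if hammingNorm c = 1 then 1 else 0)) ≠ 0)).card
        from rfl]
    rw [hset, Finset.card_insert_of_notMem (by simp [hammingNorm_zero]), count1]
  · rw [filter_char m Odd]
    have hfun : (∑ r ∈ univ.filter (fun r : Fin m → ZMod 3 => Odd (hammingNorm r)), A3pow m r)
        = fun c => (if hammingNorm c = 1 then (1:F2) else 0) := by
      funext c
      erw [Finset.sum_apply]
      exact sum_odd m c
    refine (congrArg hammingNorm hfun).trans ?_
    rw [show hammingNorm (fun c : Fin m → ZMod 3 => (if hammingNorm c = 1 then (1:F2) else 0))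
        = (univ.filter (fun c : Fin m → ZMod 3 =>
            (if hammingNorm c = 1 then (1:F2) else 0) ≠ 0)).card from rfl]
    rw [show (univ.filter (fun c : Fin m → ZMod 3 =>
            (if hammingNorm c = 1 then (1:F2) else 0) ≠ 0))
        = univ.filter (fun c => hammingNorm c = 1) from by
      ext c
      by_cases h1 : hammingNorm c = 1 <;> simp [h1]]
    exact count1 m
end

section
/- The minimum distances of the abelian codes 𝒜(m, W_even) and 𝒜(m, W_odd) with W_even = {w ∈ {0,…,m} : w even} and W_odd = {w ∈ {0,…,m} : w odd} are at most 2m+1 and 2m respectively; hence log(d_min)/log(3^m) → 0 as m → ∞ for these code families. -/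
open Finset

open Filter Asymptotics in
lemma tendsto_aux (f : ℕ → ℕ) (h1 : ∀ m, 1 ≤ m → 1 ≤ f m) (h2 : ∀ m, 1 ≤ m → f m ≤ 2*m+1) :
    Filter.Tendsto (fun m : ℕ => Real.log (f m) / Real.log (3^m)) Filter.atTop (nhds 0) := by
  have hlog3 : (0:ℝ) < Real.log 3 := Real.log_pos (by norm_num)
  have htend : Tendsto (fun x : ℝ => 2*x+1) atTop atTop := by
    apply tendsto_atTop_add_const_right
    exact (tendsto_id (α := ℝ)).const_mul_atTop (by norm_num)
  have h1' : (fun x : ℝ => Real.log (2*x+1)) =o[atTop] (fun x => 2*x+1) :=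
    Real.isLittleO_log_id_atTop.comp_tendsto htend
  have hO : (fun x : ℝ => 2*x+1) =O[atTop] (fun x => x * Real.log 3) := by
    refine IsBigO.of_bound (3 / Real.log 3) ?_
    filter_upwards [eventually_ge_atTop (1:ℝ)] with x hx
    rw [Real.norm_eq_abs, Real.norm_eq_abs, abs_of_nonneg (by linarith),
      abs_of_nonneg (by positivity)]
    rw [div_mul_eq_mul_div, le_div_iff₀ hlog3]
    nlinarith [mul_le_mul_of_nonneg_right (show 2*x+1 ≤ 3*x by linarith) hlog3.le]
  have hbound : Tendsto (fun x : ℝ => Real.log (2*x+1) / (x * Real.log 3)) atTop (nhds 0) :=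
    (h1'.trans_isBigO hO).tendsto_div_nhds_zero
  have hboundN : Tendsto (fun m : ℕ => Real.log (2*(m:ℝ)+1) / ((m:ℝ) * Real.log 3)) atTop (nhds 0) :=
    hbound.comp tendsto_natCast_atTop_atTop
  refine tendsto_of_tendsto_of_tendsto_of_le_of_le' tendsto_const_nhds hboundN ?_ ?_
  · filter_upwards [eventually_ge_atTop 1] with m hm
    have hf : (1:ℝ) ≤ (f m : ℝ) := by exact_mod_cast h1 m hm
    have : (0:ℝ) ≤ Real.log (3^m) := by
      rw [Real.log_pow]; positivity
    exact div_nonneg (Real.log_nonneg hf) this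
  · filter_upwards [eventually_ge_atTop 1] with m hm
    have hm' : (1:ℝ) ≤ (m:ℝ) := by exact_mod_cast hm
    rw [Real.log_pow]
    have hden : (0:ℝ) < (m:ℝ) * Real.log 3 := by
      apply mul_pos (by linarith) hlog3
    have hnum : Real.log (f m) ≤ Real.log (2*(m:ℝ)+1) := by
      apply Real.log_le_log (by exact_mod_cast h1 m hm)
      push_cast
      exact_mod_cast (by exact_mod_cast h2 m hm : (f m : ℝ) ≤ 2*(m:ℝ)+1)
    exact (div_le_div_iff_of_pos_right hden).mpr hnum

lemma dftL_apply (m : ℕ) (α : F4) (j : Fin m → ZMod 3) (a : (Fin m → ZMod 3) → F2) :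
    dftL m α j a = ∑ i, α ^ (∑ l, i l * j l).val * algebraMap F2 F4 (a i) := by
  simp [dftL, LinearMap.sum_apply, Algebra.smul_def, mul_comm]

lemma dftL_single (m : ℕ) (α : F4) (j x : Fin m → ZMod 3) :
    dftL m α j (Pi.single x 1) = α ^ (∑ l, x l * j l).val := by
  rw [dftL_apply]
  rw [Finset.sum_eq_single x]
  · simp
  · intro b _ hb; simp [Pi.single_apply, hb]
  · simp
lemma two_eq_zero_F4 : (2 : F4) = 0 := by
  have := CharP.cast_eq_zero F4 2
  simpa using this

lemma alpha_sum {α : F4} (hα : orderOf α = 3) : α + α^2 = 1 := by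
  have h3 : α ^ 3 = 1 := by rw [← hα]; exact pow_orderOf_eq_one α
  have h1 : α ≠ 1 := by
    intro h; rw [h, orderOf_one] at hα; omega
  have : (α - 1) * (α^2 + α + 1) = 0 := by linear_combination h3
  rcases mul_eq_zero.1 this with h | h
  · exact absurd (by linear_combination h) h1
  · linear_combination h - two_eq_zero_F4

lemma pair_val {α : F4} (hα : orderOf α = 3) (c : ZMod 3) :
    α ^ (c.val) + α ^ ((2*c).val) = if c = 0 then 0 else 1 := by
  have hall : ∀ c : ZMod 3, c = 0 ∨ c = 1 ∨ c = 2 := by decide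
  have hs := alpha_sum hα
  rcases hall c with h | h | h <;> subst h <;>
    simp only [show ((2:ZMod 3)*1).val = 2 from rfl, show ((2:ZMod 3)*2).val = 1 from rfl,
      show ((2:ZMod 3)*0).val = 0 from rfl, show (0:ZMod 3).val = 0 from rfl,
      show (1:ZMod 3).val = 1 from rfl, show (2:ZMod 3).val = 2 from rfl, pow_zero, pow_one]
  · simp only [if_true]; linear_combination two_eq_zero_F4
  · rw [if_neg (by decide)]; linear_combination hs
  · rw [if_neg (by decide)]; linear_combination hs

def aO (m : ℕ) : (Fin m → ZMod 3) → F2 :=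
  ∑ l : Fin m, (Pi.single (Pi.single l 1) (1:F2) + Pi.single (Pi.single l 2) 1)

def aE (m : ℕ) : (Fin m → ZMod 3) → F2 := Pi.single (0 : Fin m → ZMod 3) 1 + aO m

lemma single_dot (m : ℕ) (l : Fin m) (c : ZMod 3) (j : Fin m → ZMod 3) :
    (∑ k, (Pi.single l c : Fin m → ZMod 3) k * j k) = c * j l := by
  rw [Finset.sum_eq_single l]
  · simp
  · intro b _ hb; simp [Pi.single_apply, hb]
  · simp

lemma dftL_aO {α : F4} (hα : orderOf α = 3) (m : ℕ) (j : Fin m → ZMod 3) :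
    dftL m α j (aO m) = (hammingNorm j : F4) := by
  rw [aO, map_sum]
  have step : ∀ l : Fin m,
      dftL m α j (Pi.single (Pi.single l 1) (1:F2) + Pi.single (Pi.single l 2) 1)
        = if j l ≠ 0 then (1:F4) else 0 := by
    intro l
    rw [map_add, dftL_single, dftL_single, single_dot, single_dot, one_mul]
    rw [pair_val hα]
    by_cases h : j l = 0 <;> simp [h]
  rw [Finset.sum_congr rfl fun l _ => step l, Finset.sum_boole, hammingNorm]

lemma dftL_aE {α : F4} (hα : orderOf α = 3) (m : ℕ) (j : Fin m → ZMod 3) :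
    dftL m α j (aE m) = 1 + (hammingNorm j : F4) := by
  rw [aE, map_add, dftL_aO hα, dftL_single]
  norm_num

lemma cast_odd {n : ℕ} (h : Odd n) : (n : F4) = 1 := by
  obtain ⟨k, rfl⟩ := h
  push_cast
  rw [two_eq_zero_F4]; ring

lemma cast_even {n : ℕ} (h : Even n) : (n : F4) = 0 := by
  obtain ⟨k, rfl⟩ := h
  push_cast
  have : (2:F4) = 0 := two_eq_zero_F4
  linear_combination (k:F4) * this

lemma mem_abelianCode {m : ℕ} {α : F4} {W : Finset ℕ} {a : (Fin m → ZMod 3) → F2} :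
    a ∈ abelianCode m α W ↔ ∀ j, hammingNorm j ∉ W → dftL m α j a = 0 := by
  simp [abelianCode, Submodule.mem_iInf, LinearMap.mem_ker]

lemma hn_le_m {m : ℕ} (j : Fin m → ZMod 3) : hammingNorm j ≤ m := by
  simpa using hammingNorm_le_card_fintype (x := j)

lemma aE_mem {m : ℕ} {α : F4} (hα : orderOf α = 3) :
    aE m ∈ abelianCode m α ((Finset.range (m+1)).filter Even) := by
  rw [mem_abelianCode]
  intro j hj
  have hmem : hammingNorm j ∈ Finset.range (m+1) :=
    Finset.mem_range.2 (Nat.lt_succ_of_le (hn_le_m j))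
  have hodd : Odd (hammingNorm j) := by
    rw [← Nat.not_even_iff_odd]
    intro he; exact hj (Finset.mem_filter.2 ⟨hmem, he⟩)
  rw [dftL_aE hα, cast_odd hodd]
  linear_combination two_eq_zero_F4

lemma aO_mem {m : ℕ} {α : F4} (hα : orderOf α = 3) :
    aO m ∈ abelianCode m α ((Finset.range (m+1)).filter Odd) := by
  rw [mem_abelianCode]
  intro j hj
  have hmem : hammingNorm j ∈ Finset.range (m+1) :=
    Finset.mem_range.2 (Nat.lt_succ_of_le (hn_le_m j))
  have heven : Even (hammingNorm j) := by
    rw [← Nat.not_odd_iff_even]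
    intro he; exact hj (Finset.mem_filter.2 ⟨hmem, he⟩)
  rw [dftL_aO hα, cast_even heven]

lemma hn_add_le {m : ℕ} (f g : (Fin m → ZMod 3) → F2) :
    hammingNorm (f + g) ≤ hammingNorm f + hammingNorm g := by
  have := hammingDist_triangle (f + g) g 0
  rw [hammingDist_zero_right, hammingDist_zero_right, hammingDist_eq_hammingNorm,
    show -(f + g) + g = f by
      ext x; simp only [Pi.add_apply, Pi.neg_apply]
      generalize f x = a; generalize g x = b; revert a b; decide] at this
  exact this

lemma hn_single_le {m : ℕ} (x : Fin m → ZMod 3) :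
    hammingNorm (Pi.single x (1:F2) : (Fin m → ZMod 3) → F2) ≤ 1 := by
  unfold hammingNorm
  refine le_trans (Finset.card_le_card (fun i hi => ?_)) (Finset.card_singleton x).le
  simp only [Finset.mem_filter, Finset.mem_univ, true_and] at hi
  rw [Finset.mem_singleton]
  by_contra h
  exact hi (by rw [Pi.single_apply, if_neg h])

lemma hn_aO_le (m : ℕ) : hammingNorm (aO m) ≤ 2 * m := by
  calc hammingNorm (aO m)
      ≤ ∑ _l : Fin m, 2 := by
        refine le_trans (Finset.le_sum_of_subadditive hammingNorm hammingNorm_zero.le hn_add_le _ _) ?_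
        refine Finset.sum_le_sum (fun l _ => ?_)
        exact le_trans (hn_add_le _ _) (add_le_add (hn_single_le _) (hn_single_le _))
    _ = 2 * m := by simp [mul_comm]

lemma hn_aE_le (m : ℕ) : hammingNorm (aE m) ≤ 2 * m + 1 := by
  rw [aE, add_comm]
  exact le_trans (hn_add_le _ _) (add_le_add (hn_aO_le m) (hn_single_le _))

lemma aE_ne_zero (m : ℕ) : aE m ≠ 0 := by
  intro h
  have h0 : aE m 0 = 1 := by
    simp only [aE, Pi.add_apply, aO, Finset.sum_apply, Pi.single_eq_same]
    rw [Finset.sum_eq_zero, add_zero]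
    intro l _
    have h1 : (0 : Fin m → ZMod 3) ≠ Pi.single l 1 := by
      intro heq; have := congrFun heq l; simp at this
    have h2 : (0 : Fin m → ZMod 3) ≠ Pi.single l 2 := by
      intro heq; have := congrFun heq l; simp at this
      exact absurd this.symm (by decide)
    simp only [Pi.add_apply, Pi.single_apply, if_neg h1, if_neg h2, add_zero]
  rw [h] at h0
  simp at h0

lemma aO_ne_zero {m : ℕ} (hm : 1 ≤ m) : aO m ≠ 0 := by
  intro h
  set l0 : Fin m := ⟨0, hm⟩
  set p : Fin m → ZMod 3 := Pi.single l0 1 with hp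
  have h0 : aO m p = 1 := by
    rw [aO, Finset.sum_apply, Finset.sum_eq_single l0]
    · have h2 : p ≠ Pi.single l0 2 := by
        intro heq; have := congrFun heq l0; simp [hp] at this
        exact absurd this (by decide)
      simp [Pi.single_apply, if_neg h2]
      exact hp
    · intro l _ hl
      have h1 : p ≠ Pi.single l 1 := by
        intro heq
        have := congrFun heq l0
        rw [hp, Pi.single_eq_same, Pi.single_eq_of_ne (Ne.symm hl)] at this
        exact one_ne_zero this
      have h2 : p ≠ Pi.single l 2 := by
        intro heq
        have := congrFun heq l0
        rw [hp, Pi.single_eq_same, Pi.single_eq_of_ne (Ne.symm hl)] at this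
        exact one_ne_zero this
      simp only [Pi.add_apply, Pi.single_apply, if_neg h1, if_neg h2, add_zero]
    · intro habs; exact absurd (Finset.mem_univ l0) habs
  rw [h] at h0
  simp at h0

lemma minDist_le {m : ℕ} {C : Submodule F2 ((Fin m → ZMod 3) → F2)}
    {a : (Fin m → ZMod 3) → F2} (ha : a ∈ C) (h0 : a ≠ 0) :
    minDist C ≤ hammingNorm a :=
  Nat.sInf_le ⟨a, ha, h0, rfl⟩

lemma one_le_minDist {m : ℕ} {C : Submodule F2 ((Fin m → ZMod 3) → F2)}
    {a : (Fin m → ZMod 3) → F2} (ha : a ∈ C) (h0 : a ≠ 0) :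
    1 ≤ minDist C := by
  have hne : {d : ℕ | ∃ a ∈ C, a ≠ 0 ∧ hammingNorm a = d}.Nonempty :=
    ⟨hammingNorm a, a, ha, h0, rfl⟩
  obtain ⟨b, _, hb0, hbd⟩ := Nat.sInf_mem hne
  rw [minDist, ← hbd]
  exact Nat.one_le_iff_ne_zero.2 (hammingNorm_ne_zero_iff.2 hb0)

/-- The minimum distances of the abelian codes with even (resp. odd) frequency weight
sets are at most `2m+1` (resp. `2m`); hence `log d_min / log 3^m → 0`. -/
theorem evenOdd_minDist_bound (α : F4) (hα : orderOf α = 3) :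
    (∀ m : ℕ, 1 ≤ m →
      minDist (abelianCode m α ((Finset.range (m+1)).filter Even)) ≤ 2*m + 1 ∧
      minDist (abelianCode m α ((Finset.range (m+1)).filter Odd)) ≤ 2*m) ∧
    Filter.Tendsto (fun m : ℕ =>
        Real.log (minDist (abelianCode m α ((Finset.range (m+1)).filter Even)))
          / Real.log (3^m)) Filter.atTop (nhds 0) ∧
    Filter.Tendsto (fun m : ℕ =>
        Real.log (minDist (abelianCode m α ((Finset.range (m+1)).filter Odd)))
          / Real.log (3^m)) Filter.atTop (nhds 0) := by
  
  have hE : ∀ m : ℕ, 1 ≤ m →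
      minDist (abelianCode m α ((Finset.range (m+1)).filter Even)) ≤ 2*m + 1 :=
    fun m _ => le_trans (minDist_le (aE_mem hα) (aE_ne_zero m)) (hn_aE_le m)
  have hOdd : ∀ m : ℕ, 1 ≤ m →
      minDist (abelianCode m α ((Finset.range (m+1)).filter Odd)) ≤ 2*m :=
    fun m hm => le_trans (minDist_le (aO_mem hα) (aO_ne_zero hm)) (hn_aO_le m)
  have h1E : ∀ m : ℕ, 1 ≤ m →
      1 ≤ minDist (abelianCode m α ((Finset.range (m+1)).filter Even)) :=
    fun m _ => one_le_minDist (aE_mem hα) (aE_ne_zero m)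
  have h1O : ∀ m : ℕ, 1 ≤ m →
      1 ≤ minDist (abelianCode m α ((Finset.range (m+1)).filter Odd)) :=
    fun m hm => one_le_minDist (aO_mem hα) (aO_ne_zero hm)
  exact ⟨fun m hm => ⟨hE m hm, hOdd m hm⟩,
    tendsto_aux _ h1E hE,
    tendsto_aux _ h1O (fun m hm => le_trans (hOdd m hm) (by omega))⟩
end

section
/- Let R ∈ (0,1). There exists a sequence of parameters (m, r₁(m), r₂(m)) with m → ∞ such that the rate of BiD(m,r₁,r₂) (dimension divided by 3^m) converges to R, r₁/m → 2/3, r₂/m → 2/3, and liminf_{m→∞} log(d_min(BiD(m,r₁,r₂)))/log(3^m) ≥ log 6 / log 27 > 0.543. -/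
open Finset

def B3 : Matrix (ZMod 3) (ZMod 3) F2 := !![1,1,1; 1,0,1; 1,1,0]

lemma A3_mul_B3 : A3 * B3 = 1 := by decide

def B3pow (m : ℕ) : Matrix (Fin m → ZMod 3) (Fin m → ZMod 3) F2 :=
  fun r c => ∏ i, B3 (r i) (c i)

lemma prod_entry_one (m : ℕ) (r c : Fin m → ZMod 3) :
    (∏ i, (1 : Matrix (ZMod 3) (ZMod 3) F2) (r i) (c i)) =
      (1 : Matrix (Fin m → ZMod 3) (Fin m → ZMod 3) F2) r c := by
  by_cases h : r = c
  · subst h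
    simp [Matrix.one_apply]
  · rw [Matrix.one_apply_ne h]
    obtain ⟨i, hi⟩ := Function.ne_iff.1 h
    exact Finset.prod_eq_zero (Finset.mem_univ i) (Matrix.one_apply_ne hi)

lemma A3pow_mul_B3pow (m : ℕ) : A3pow m * B3pow m = 1 := by
  ext r c
  rw [Matrix.mul_apply]
  have : ∀ k : Fin m → ZMod 3, A3pow m r k * B3pow m k c
      = ∏ i, (A3 (r i) (k i) * B3 (k i) (c i)) := by
    intro k; rw [A3pow, B3pow, ← Finset.prod_mul_distrib]
  simp_rw [this]
  have h2 := Finset.prod_univ_sum (fun _ : Fin m => (Finset.univ : Finset (ZMod 3)))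
    (fun i j => A3 (r i) j * B3 j (c i))
  have h3 : ∀ i : Fin m, ∑ j : ZMod 3, A3 (r i) j * B3 j (c i) = (1 : Matrix _ _ F2) (r i) (c i) := by
    intro i; rw [← A3_mul_B3, Matrix.mul_apply]
  rw [Fintype.piFinset_univ] at h2
  rw [← prod_entry_one m r c, ← Finset.prod_congr rfl (fun i _ => h3 i), ← h2]

lemma vecMul_A3pow_injective (m : ℕ) :
    Function.Injective (fun lam : (Fin m → ZMod 3) → F2 => Matrix.vecMul lam (A3pow m)) := by
  intro x y h
  have := congrArg (fun v => Matrix.vecMul v (B3pow m)) h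
  simpa [Matrix.vecMul_vecMul, A3pow_mul_B3pow] using this


lemma hammingNorm_eq_sum {m : ℕ} (r : Fin m → ZMod 3) :
    hammingNorm r = ∑ i, if r i = 0 then 0 else 1 := by
  rw [hammingNorm, Finset.card_filter]
  exact Finset.sum_congr rfl (fun i _ => by by_cases h : r i = 0 <;> simp [h])

lemma hammingNorm_cons {m : ℕ} (z : ZMod 3) (x : Fin m → ZMod 3) :
    hammingNorm (Fin.cons z x : Fin (m+1) → ZMod 3) = (if z = 0 then 0 else 1) + hammingNorm x := by
  rw [hammingNorm_eq_sum, hammingNorm_eq_sum, Fin.sum_univ_succ]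
  simp

lemma hammingNorm_le' {m : ℕ} (r : Fin m → ZMod 3) : hammingNorm r ≤ m := by
  exact (Finset.card_filter_le (Finset.univ : Finset (Fin m)) (fun i => r i ≠ 0)).trans (by simp)

lemma sum_pi_succ {M : Type*} [AddCommMonoid M] (m : ℕ) (f : (Fin (m+1) → ZMod 3) → M) :
    ∑ r : Fin (m+1) → ZMod 3, f r = ∑ z : ZMod 3, ∑ x : Fin m → ZMod 3, f (Fin.cons z x) := by
  have h1 : ∑ r : Fin (m+1) → ZMod 3, f r
      = ∑ p : ZMod 3 × (Fin m → ZMod 3), f (Fin.cons p.1 p.2) := by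
    refine Fintype.sum_equiv (Fin.consEquiv (fun _ : Fin (m+1) => ZMod 3)).symm _ _ (fun r => ?_)
    simp [Fin.consEquiv, Fin.cons_self_tail]
  rw [h1, Fintype.sum_prod_type]

lemma A3_row_card (z : ZMod 3) :
    (Finset.univ.filter (fun y : ZMod 3 => A3 z y ≠ 0)).card = if z = 0 then 3 else 2 := by
  revert z; decide

lemma hammingNorm_A3pow (m : ℕ) (r : Fin m → ZMod 3) :
    hammingNorm (A3pow m r) = 2 ^ hammingNorm r * 3 ^ (m - hammingNorm r) := by
  have h1 : hammingNorm (A3pow m r)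
      = (Fintype.piFinset (fun i => Finset.univ.filter (fun y : ZMod 3 => A3 (r i) y ≠ 0))).card := by
    rw [hammingNorm]
    congr 1
    ext c
    simp only [Fintype.mem_piFinset, Finset.mem_filter, Finset.mem_univ, true_and,
      Finset.mem_filter]
    rw [A3pow]
    constructor
    · intro h i hzero
      exact h (Finset.prod_eq_zero (Finset.mem_univ i) hzero)
    · intro h hc
      obtain ⟨i, _, hi⟩ := Finset.prod_eq_zero_iff.1 hc
      exact h i hi
  rw [h1, Fintype.card_piFinset]
  rw [Finset.prod_congr rfl (fun i (_ : i ∈ Finset.univ) => A3_row_card (r i))]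
  rw [Finset.prod_ite, Finset.prod_const, Finset.prod_const]
  have hn : (Finset.univ.filter (fun i => ¬ r i = 0)).card = hammingNorm r := by
    simp [hammingNorm]
  have hsum := Finset.card_filter_add_card_filter_not
    (s := (Finset.univ : Finset (Fin m))) (p := fun i => r i = 0)
  simp only [Finset.card_univ, Fintype.card_fin, Fintype.card_fun] at hsum
  rw [hn]
  have : (Finset.univ.filter (fun i => r i = 0)).card = m - hammingNorm r := by omega
  rw [this, mul_comm]


lemma sum_zmod3 {M : Type*} [AddCommMonoid M] (g : ZMod 3 → M) :
    ∑ z : ZMod 3, g z = g 0 + g 1 + g 2 := by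
  rw [show (Finset.univ : Finset (ZMod 3)) = {0,1,2} from by decide]
  rw [Finset.sum_insert (by decide), Finset.sum_insert (by decide), Finset.sum_singleton]
  exact (add_assoc _ _ _).symm

lemma card_pi3 (m : ℕ) : Fintype.card (Fin m → ZMod 3) = 3 ^ m := by
  simp



-- count of vectors with given weight
def cnt (m w : ℕ) : ℕ := ((Finset.univ : Finset (Fin m → ZMod 3)).filter
  (fun r => hammingNorm r = w)).card

lemma cnt_eq_sum (m w : ℕ) :
    cnt m w = ∑ r : Fin m → ZMod 3, if hammingNorm r = w then 1 else 0 := by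
  rw [cnt, Finset.card_filter]

lemma cnt_zero (w : ℕ) : cnt 0 w = if w = 0 then 1 else 0 := by
  rw [cnt_eq_sum]
  rw [Fintype.sum_eq_single (fun (i : Fin 0) => (0 : ZMod 3))
    (fun x hx => absurd (funext (fun i => i.elim0)) hx)]
  have : hammingNorm (fun (i : Fin 0) => (0 : ZMod 3)) = 0 := by
    simp [hammingNorm]
  rw [this]
  by_cases h : w = 0 <;> simp [h, eq_comm]

lemma cnt_succ (m w : ℕ) :
    cnt (m+1) w = cnt m w + 2 * (if w = 0 then 0 else cnt m (w-1)) := by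
  rw [cnt_eq_sum, sum_pi_succ, sum_zmod3]
  have h0 : ∀ z : ZMod 3, z ≠ 0 → (∑ x : Fin m → ZMod 3,
      if hammingNorm (Fin.cons z x : Fin (m+1) → ZMod 3) = w then 1 else 0)
      = (if w = 0 then 0 else cnt m (w-1)) := by
    intro z hz
    by_cases hw : w = 0
    · subst hw
      rw [Finset.sum_eq_zero]
      · simp
      intro x _
      rw [hammingNorm_cons]
      simp [hz]
    · rw [if_neg hw, cnt_eq_sum]
      apply Finset.sum_congr rfl
      intro x _
      rw [hammingNorm_cons, if_neg hz]
      exact if_congr (by omega) rfl rfl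
  have hz0 : (∑ x : Fin m → ZMod 3,
      if hammingNorm (Fin.cons (0:ZMod 3) x : Fin (m+1) → ZMod 3) = w then 1 else 0) = cnt m w := by
    rw [cnt_eq_sum]
    apply Finset.sum_congr rfl
    intro x _
    rw [hammingNorm_cons, if_pos rfl, zero_add]
  rw [hz0, h0 1 (by decide), h0 2 (by decide)]
  ring

lemma cnt_choose (m : ℕ) : ∀ w : ℕ, cnt m w = Nat.choose m w * 2 ^ w := by
  induction m with
  | zero => intro w; rw [cnt_zero]; cases w <;> simp
  | succ m ih =>
    intro w
    rw [cnt_succ, ih w]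
    cases w with
    | zero => simp
    | succ v =>
      rw [if_neg (Nat.succ_ne_zero v), Nat.succ_sub_one, ih v, Nat.choose_succ_succ]
      ring

lemma exists_weight (m : ℕ) : ∀ w : ℕ, w ≤ m → ∃ r : Fin m → ZMod 3, hammingNorm r = w := by
  induction m with
  | zero =>
    intro w hw
    have hw0 : w = 0 := Nat.le_zero.1 hw
    subst hw0
    exact ⟨fun i => 0, by simp [hammingNorm]⟩
  | succ m ih =>
    intro w hw
    by_cases h : w ≤ m
    · obtain ⟨r, hr⟩ := ih w h
      exact ⟨Fin.cons 0 r, by rw [hammingNorm_cons]; simpa using hr⟩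
    · have hw' : w = m + 1 := by omega
      obtain ⟨r, hr⟩ := ih m le_rfl
      refine ⟨Fin.cons 1 r, ?_⟩
      rw [hammingNorm_cons, hw', hr]
      rw [if_neg (by decide : (1 : ZMod 3) ≠ 0)]
      omega

-- Chebyshev second moment
lemma moment2 (m : ℕ) :
    ∑ r : Fin m → ZMod 3, ((3 * (hammingNorm r : ℤ) - 2 * m)^2) = 2 * (m : ℤ) * 3^m := by
  induction m with
  | zero =>
    rw [Fintype.sum_eq_single (fun (i : Fin 0) => (0 : ZMod 3))
      (fun x hx => absurd (funext (fun i => i.elim0)) hx)]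
    norm_num [hammingNorm]
  | succ m ih =>
    rw [sum_pi_succ, sum_zmod3]
    push_cast
    have key : ∀ z : ZMod 3, (∑ x : Fin m → ZMod 3,
        ((3 * (hammingNorm (Fin.cons z x : Fin (m+1) → ZMod 3) : ℤ) - 2 * ((m:ℤ)+1))^2))
        = ∑ x : Fin m → ZMod 3,
          ((3 * ((if z = 0 then (0:ℤ) else 1) + (hammingNorm x : ℤ)) - 2 * ((m:ℤ)+1))^2) := by
      intro z
      apply Finset.sum_congr rfl
      intro x _
      rw [hammingNorm_cons]
      push_cast
      by_cases h : z = 0 <;> simp [h]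
    rw [key 0, key 1, key 2]
    simp only [if_pos rfl, if_true, if_neg (by decide : (1 : ZMod 3) ≠ 0), if_neg (by decide : (2 : ZMod 3) ≠ 0)]
    have expand : ∀ x : Fin m → ZMod 3,
        (3 * ((0:ℤ) + (hammingNorm x : ℤ)) - 2 * ((m:ℤ)+1))^2
        + (3 * ((1:ℤ) + (hammingNorm x : ℤ)) - 2 * ((m:ℤ)+1))^2
        + (3 * ((1:ℤ) + (hammingNorm x : ℤ)) - 2 * ((m:ℤ)+1))^2
        = 3 * (3 * (hammingNorm x : ℤ) - 2 * m)^2 + 6 := by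
      intro x; ring
    rw [← Finset.sum_add_distrib, ← Finset.sum_add_distrib]
    rw [Finset.sum_congr rfl (fun x _ => expand x)]
    rw [Finset.sum_add_distrib, ← Finset.mul_sum, ih]
    simp only [Finset.sum_const, Finset.card_univ, card_pi3]
    push_cast
    ring


-- generic indicator-sum form of hammingNorm
lemma hammingNorm_eq_sum' {ι : Type*} [Fintype ι] (f : ι → F2) :
    hammingNorm f = ∑ i, if f i = 0 then 0 else 1 := by
  rw [hammingNorm, Finset.card_filter]
  exact Finset.sum_congr rfl (fun i _ => by by_cases h : f i = 0 <;> simp [h])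

lemma f2_add_eq_zero {u v : F2} (h : u + v = 0) : u = v := by revert u v; decide

lemma fun_add_eq_zero {X : Type*} {f g : X → F2} (h : ∀ x, f x + g x = 0) : f = g :=
  funext fun x => f2_add_eq_zero (h x)

-- arithmetic lemmas
lemma arith1 (m a b : ℕ) (hb : b ≤ m+1) :
    2^(a+b-(m+1)) * 3^(m+1-b) ≤ 3 * (2^(a-1 + min b m - m) * 3^(m - min b m)) := by
  rcases le_or_gt b m with h | h
  · rw [min_eq_left h, show m+1-b = (m-b)+1 from by omega, pow_succ']
    have h2 : 2^(a+b-(m+1)) ≤ 2^(a-1+b-m) :=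
      Nat.pow_le_pow_right (by norm_num) (by omega)
    calc 2^(a+b-(m+1)) * (3 * 3^(m-b)) ≤ 2^(a-1+b-m) * (3 * 3^(m-b)) :=
          Nat.mul_le_mul_right _ h2
      _ = 3 * (2^(a-1+b-m) * 3^(m-b)) := by ring
  · have hb' : b = m + 1 := by omega
    subst hb'
    rw [min_eq_right (by omega : m ≤ m+1), show a+(m+1)-(m+1) = a from by omega,
      show m+1-(m+1) = 0 from by omega, show a-1+m-m = a-1 from by omega,
      show m - m = 0 from by omega]
    simp only [pow_zero, mul_one]
    rcases Nat.eq_zero_or_pos a with ha | ha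
    · subst ha; norm_num
    · rw [show a = (a-1)+1 from by omega, pow_succ, show a-1+1-1 = a-1 from by omega]
      calc 2^(a-1) * 2 ≤ 2^(a-1) * 3 := Nat.mul_le_mul_left _ (by norm_num)
        _ = 3 * 2^(a-1) := by ring

lemma arith2 (m a b : ℕ) (hb1 : 1 ≤ b) (hb : b ≤ m+1) :
    2^(a+b-(m+1)) * 3^(m+1-b) ≤ 2 * (2^(a-1+(b-1)-m) * 3^(m-(b-1))) := by
  rw [show m-(b-1) = m+1-b from by omega]
  have h2 : 2^(a+b-(m+1)) ≤ 2 * 2^(a-1+(b-1)-m) := by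
    calc 2^(a+b-(m+1)) ≤ 2^(a-1+(b-1)-m+1) := Nat.pow_le_pow_right (by norm_num) (by omega)
      _ = 2 * 2^(a-1+(b-1)-m) := by rw [pow_succ]; ring
  calc 2^(a+b-(m+1)) * 3^(m+1-b) ≤ (2 * 2^(a-1+(b-1)-m)) * 3^(m+1-b) :=
        Nat.mul_le_mul_right _ h2
    _ = 2 * (2^(a-1+(b-1)-m) * 3^(m+1-b)) := by ring

lemma arith3 (m a b : ℕ) (hb1 : 1 ≤ b) (hb : b ≤ m+1) :
    2^(a+b-(m+1)) * 3^(m+1-b) ≤ 2^(a+(b-1)-m) * 3^(m-(b-1)) := by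
  rw [show m-(b-1) = m+1-b from by omega, show a+(b-1)-m = a+b-(m+1) from by omega]

-- cons product decomposition
lemma A3pow_cons (m : ℕ) (z y : ZMod 3) (r' x : Fin m → ZMod 3) :
    A3pow (m+1) (Fin.cons z r') (Fin.cons y x) = A3 z y * A3pow m r' x := by
  rw [A3pow, A3pow, Fin.prod_univ_succ]
  simp

lemma hammingNorm_pi_succ (m : ℕ) (c : (Fin (m+1) → ZMod 3) → F2) :
    hammingNorm c = ∑ y : ZMod 3, hammingNorm (fun x => c (Fin.cons y x)) := by
  rw [hammingNorm_eq_sum', sum_pi_succ]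
  exact Finset.sum_congr rfl (fun y _ => (hammingNorm_eq_sum' _).symm)

-- the zero-b case
lemma key_b0 (m a : ℕ) (lam : (Fin m → ZMod 3) → F2)
    (hs : ∀ r, lam r ≠ 0 → a ≤ hammingNorm r ∧ hammingNorm r ≤ 0)
    (hc : Matrix.vecMul lam (A3pow m) ≠ 0) :
    2^(a+0-m) * 3^(m-0) ≤ hammingNorm (Matrix.vecMul lam (A3pow m)) := by
  have hz : ∀ r, r ≠ (0 : Fin m → ZMod 3) → lam r = 0 := by
    intro r hr
    by_contra h
    exact hr (hammingNorm_eq_zero.1 (Nat.le_zero.1 (hs r h).2))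
  have hl0 : lam 0 ≠ 0 := by
    intro h
    apply hc
    funext y
    rw [Matrix.vecMul, dotProduct]
    apply Finset.sum_eq_zero
    intro r _
    by_cases hr : r = 0
    · rw [hr, h, zero_mul]
    · rw [hz r hr, zero_mul]
  have hl1 : lam 0 = 1 := by
    revert hl0; generalize lam 0 = u; revert u; decide
  have hceq : Matrix.vecMul lam (A3pow m) = A3pow m 0 := by
    funext y
    rw [Matrix.vecMul, dotProduct]
    rw [Finset.sum_eq_single (0 : Fin m → ZMod 3)]
    · rw [hl1, one_mul]
    · intro r _ hr; rw [hz r hr, zero_mul]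
    · intro h; exact absurd (Finset.mem_univ _) h
  have ha : a = 0 := Nat.le_zero.1 (le_trans (hs 0 hl0).1 (by simp [hammingNorm]))
  rw [hceq, hammingNorm_A3pow, ha]
  have h0 : hammingNorm (0 : Fin m → ZMod 3) = 0 := by simp [hammingNorm]
  rw [h0]
  simp

def muF (m : ℕ) (lam : (Fin (m+1) → ZMod 3) → F2) (y : ZMod 3) : (Fin m → ZMod 3) → F2 :=
  fun r' => A3 0 y * lam (Fin.cons 0 r') + A3 1 y * lam (Fin.cons 1 r') + A3 2 y * lam (Fin.cons 2 r')

lemma muF_zero (m : ℕ) (lam : (Fin (m+1) → ZMod 3) → F2) :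
    muF m lam 0 = fun r' => lam (Fin.cons 0 r') + lam (Fin.cons 1 r') + lam (Fin.cons 2 r') := by
  funext r'
  rw [muF, show A3 0 0 = 1 from by decide, show A3 1 0 = 1 from by decide,
    show A3 2 0 = 1 from by decide, one_mul, one_mul, one_mul]

lemma muF_one (m : ℕ) (lam : (Fin (m+1) → ZMod 3) → F2) :
    muF m lam 1 = fun r' => lam (Fin.cons 0 r') + lam (Fin.cons 1 r') := by
  funext r'
  rw [muF, show A3 0 1 = 1 from by decide, show A3 1 1 = 1 from by decide,
    show A3 2 1 = 0 from by decide, one_mul, one_mul, zero_mul, add_zero]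

lemma muF_two (m : ℕ) (lam : (Fin (m+1) → ZMod 3) → F2) :
    muF m lam 2 = fun r' => lam (Fin.cons 0 r') + lam (Fin.cons 2 r') := by
  funext r'
  rw [muF, show A3 0 2 = 1 from by decide, show A3 1 2 = 0 from by decide,
    show A3 2 2 = 1 from by decide, one_mul, one_mul, zero_mul, add_zero]

lemma muF_decomp (m : ℕ) (lam : (Fin (m+1) → ZMod 3) → F2) (y : ZMod 3) (x : Fin m → ZMod 3) :
    Matrix.vecMul lam (A3pow (m+1)) (Fin.cons y x) = Matrix.vecMul (muF m lam y) (A3pow m) x := by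
  rw [Matrix.vecMul, dotProduct, Matrix.vecMul, dotProduct]
  rw [sum_pi_succ m (fun r => lam r * A3pow (m+1) r (Fin.cons y x))]
  rw [sum_zmod3]
  have e : ∀ z : ZMod 3,
      (∑ x' : Fin m → ZMod 3, lam (Fin.cons z x') * A3pow (m+1) (Fin.cons z x') (Fin.cons y x))
      = ∑ x' : Fin m → ZMod 3, (A3 z y * lam (Fin.cons z x')) * A3pow m x' x := by
    intro z
    apply Finset.sum_congr rfl
    intro x' _
    rw [A3pow_cons]
    ring
  rw [e 0, e 1, e 2, ← Finset.sum_add_distrib, ← Finset.sum_add_distrib]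
  apply Finset.sum_congr rfl
  intro r' _
  rw [muF]
  ring

lemma f2_uuw : ∀ u w : F2, u + u + w = w := by decide
lemma f2_sum0 : ∀ u v w : F2, u + v + w = 0 → u + v = w := by decide
lemma f2_mid0 : ∀ u v w : F2, u + v + w = 0 → u = w → v = 0 := by decide
lemma f2_last0 : ∀ u v w : F2, u + v + w = 0 → u = v → w = 0 := by decide

theorem key_s18 : ∀ m b, b ≤ m → ∀ a (lam : (Fin m → ZMod 3) → F2),
    (∀ r, lam r ≠ 0 → a ≤ hammingNorm r ∧ hammingNorm r ≤ b) →
    Matrix.vecMul lam (A3pow m) ≠ 0 →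
    2^(a+b-m) * 3^(m-b) ≤ hammingNorm (Matrix.vecMul lam (A3pow m)) := by
  intro m
  induction m with
  | zero =>
    intro b hb a lam hs hc
    have hb0 : b = 0 := Nat.le_zero.1 hb
    subst hb0
    exact key_b0 0 a lam hs hc
  | succ m ih =>
    intro b hb a lam hs hc
    by_cases hb0 : b = 0
    · subst hb0; exact key_b0 (m+1) a lam hs hc
    have hb1 : 1 ≤ b := Nat.one_le_iff_ne_zero.2 hb0
    -- weight decomposition
    have hwt : hammingNorm (Matrix.vecMul lam (A3pow (m+1)))
        = hammingNorm (Matrix.vecMul (muF m lam 0) (A3pow m))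
          + hammingNorm (Matrix.vecMul (muF m lam 1) (A3pow m))
          + hammingNorm (Matrix.vecMul (muF m lam 2) (A3pow m)) := by
      rw [hammingNorm_pi_succ m, sum_zmod3]
      congr 1
      · congr 1
        · congr 1; funext x; exact muF_decomp m lam 0 x
        · congr 1; funext x; exact muF_decomp m lam 1 x
      · congr 1; funext x; exact muF_decomp m lam 2 x
    -- zero iff
    have hziff : ∀ y, Matrix.vecMul (muF m lam y) (A3pow m) = 0 ↔ muF m lam y = 0 := by
      intro y
      constructor
      · intro h
        apply vecMul_A3pow_injective m
        show Matrix.vecMul (muF m lam y) (A3pow m) = Matrix.vecMul 0 (A3pow m)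
        rw [h, Matrix.zero_vecMul]
      · intro h; rw [h, Matrix.zero_vecMul]
    -- not all zero
    have hnz : ¬ (muF m lam 0 = 0 ∧ muF m lam 1 = 0 ∧ muF m lam 2 = 0) := by
      rintro ⟨h0, h1, h2⟩
      apply hc
      funext r
      rw [← Fin.cons_self_tail r, muF_decomp m lam (r 0) (Fin.tail r)]
      rcases (by decide : ∀ y : ZMod 3, y = 0 ∨ y = 1 ∨ y = 2) (r 0) with h | h | h <;>
        rw [h] <;> simp [h0, h1, h2, Matrix.zero_vecMul]
    -- support facts
    have hsz : ∀ (z : ZMod 3), z ≠ 0 → ∀ r', lam (Fin.cons z r') ≠ 0 →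
        a - 1 ≤ hammingNorm r' ∧ hammingNorm r' ≤ b - 1 := by
      intro z hz r' h
      have := hs _ h
      rw [hammingNorm_cons, if_neg hz] at this
      omega
    have hs0' : ∀ r', lam (Fin.cons 0 r') ≠ 0 →
        a ≤ hammingNorm r' ∧ hammingNorm r' ≤ min b m := by
      intro r' h
      have := hs _ h
      rw [hammingNorm_cons, if_pos rfl, zero_add] at this
      exact ⟨this.1, le_min this.2 (hammingNorm_le' r')⟩
    have hsmu : ∀ y r', muF m lam y r' ≠ 0 →
        a - 1 ≤ hammingNorm r' ∧ hammingNorm r' ≤ min b m := by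
      intro y r' h
      have h3 : lam (Fin.cons 0 r') ≠ 0 ∨ lam (Fin.cons 1 r') ≠ 0 ∨ lam (Fin.cons 2 r') ≠ 0 := by
        by_contra hAll
        push_neg at hAll
        apply h
        rw [muF, hAll.1, hAll.2.1, hAll.2.2]
        ring
      rcases h3 with h' | h' | h'
      · have := hs0' _ h'; omega
      · have := hsz 1 (by decide) _ h'; omega
      · have := hsz 2 (by decide) _ h'; omega
    by_cases h0 : muF m lam 0 = 0 <;> by_cases h1 : muF m lam 1 = 0 <;>
      by_cases h2 : muF m lam 2 = 0
    -- all zero : contradiction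
    · exact absurd ⟨h0, h1, h2⟩ hnz
    -- h0, h1 zero, muF 2 ≠ 0 : lam2 = 0, lam0 = lam1, muF 2 = lam0, supp ⊆ [a, b-1]
    · have hl01 : ∀ r', lam (Fin.cons 0 r') = lam (Fin.cons 1 r') := by
        intro r'
        have := congrFun (muF_one m lam ▸ h1) r'
        exact f2_add_eq_zero this
      have hl2 : ∀ r', lam (Fin.cons 2 r') = 0 := by
        intro r'
        have := congrFun (muF_zero m lam ▸ h0) r'
        exact f2_last0 _ _ _ this (hl01 r')
      have hmu2 : ∀ r', muF m lam 2 r' = lam (Fin.cons 0 r') := by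
        intro r'
        rw [congrFun (muF_two m lam) r', hl2 r', add_zero]
      have hsupp : ∀ r', muF m lam 2 r' ≠ 0 →
          a ≤ hammingNorm r' ∧ hammingNorm r' ≤ b - 1 := by
        intro r' h
        rw [hmu2 r'] at h
        have ha := hs0' r' h
        have hb' := hsz 1 (by decide) r' (by rw [← hl01 r']; exact h)
        omega
      have := ih (b-1) (by omega) a (muF m lam 2) hsupp (by rw [Ne, hziff]; exact h2)
      rw [hwt, h0, h1, Matrix.zero_vecMul]
      simp only [hammingNorm_zero, zero_add]
      calc 2^(a+b-(m+1)) * 3^(m+1-b) ≤ 2^(a+(b-1)-m) * 3^(m-(b-1)) := arith3 m a b hb1 hb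
        _ ≤ _ := this
    -- h0, h2 zero, muF 1 ≠ 0 : lam0 = lam2, lam1 = 0, muF 1 = lam0
    · have hl02 : ∀ r', lam (Fin.cons 0 r') = lam (Fin.cons 2 r') := by
        intro r'
        have := congrFun (muF_two m lam ▸ h2) r'
        exact f2_add_eq_zero this
      have hl1 : ∀ r', lam (Fin.cons 1 r') = 0 := by
        intro r'
        have := congrFun (muF_zero m lam ▸ h0) r'
        exact f2_mid0 _ _ _ this (hl02 r')
      have hmu1 : ∀ r', muF m lam 1 r' = lam (Fin.cons 0 r') := by
        intro r'
        rw [congrFun (muF_one m lam) r', hl1 r', add_zero]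
      have hsupp : ∀ r', muF m lam 1 r' ≠ 0 →
          a ≤ hammingNorm r' ∧ hammingNorm r' ≤ b - 1 := by
        intro r' h
        rw [hmu1 r'] at h
        have ha := hs0' r' h
        have hb' := hsz 2 (by decide) r' (by rw [← hl02 r']; exact h)
        omega
      have := ih (b-1) (by omega) a (muF m lam 1) hsupp (by rw [Ne, hziff]; exact h1)
      rw [hwt, h0, h2, Matrix.zero_vecMul]
      simp only [hammingNorm_zero, zero_add, add_zero]
      calc 2^(a+b-(m+1)) * 3^(m+1-b) ≤ 2^(a+(b-1)-m) * 3^(m-(b-1)) := arith3 m a b hb1 hb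
        _ ≤ _ := this
    -- h0 zero only : muF 1 = lam2, muF 2 = lam1, both supp ⊆ [a-1,b-1]
    · have hsum : ∀ r', lam (Fin.cons 0 r') + lam (Fin.cons 1 r') + lam (Fin.cons 2 r') = 0 :=
        fun r' => congrFun (muF_zero m lam ▸ h0) r'
      have hmu1 : ∀ r', muF m lam 1 r' = lam (Fin.cons 2 r') := by
        intro r'
        rw [congrFun (muF_one m lam) r']
        exact f2_sum0 _ _ _ (hsum r')
      have hmu2 : ∀ r', muF m lam 2 r' = lam (Fin.cons 1 r') := by
        intro r'
        rw [congrFun (muF_two m lam) r']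
        have := hsum r'
        revert this
        generalize lam (Fin.cons 0 r') = u
        generalize lam (Fin.cons 1 r') = v
        generalize lam (Fin.cons 2 r') = w
        revert u v w; decide
      have hsupp1 : ∀ r', muF m lam 1 r' ≠ 0 →
          a - 1 ≤ hammingNorm r' ∧ hammingNorm r' ≤ b - 1 := by
        intro r' h; rw [hmu1 r'] at h; exact hsz 2 (by decide) r' h
      have hsupp2 : ∀ r', muF m lam 2 r' ≠ 0 →
          a - 1 ≤ hammingNorm r' ∧ hammingNorm r' ≤ b - 1 := by
        intro r' h; rw [hmu2 r'] at h; exact hsz 1 (by decide) r' h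
      have w1 := ih (b-1) (by omega) (a-1) (muF m lam 1) hsupp1 (by rw [Ne, hziff]; exact h1)
      have w2 := ih (b-1) (by omega) (a-1) (muF m lam 2) hsupp2 (by rw [Ne, hziff]; exact h2)
      rw [hwt, h0, Matrix.zero_vecMul]
      simp only [hammingNorm_zero, zero_add]
      calc 2^(a+b-(m+1)) * 3^(m+1-b) ≤ 2 * (2^(a-1+(b-1)-m) * 3^(m-(b-1))) := arith2 m a b hb1 hb
        _ = 2^(a-1+(b-1)-m) * 3^(m-(b-1)) + 2^(a-1+(b-1)-m) * 3^(m-(b-1)) := by ring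
        _ ≤ _ := Nat.add_le_add w1 w2
    -- h1, h2 zero, muF 0 ≠ 0 : lam0 = lam1, lam0 = lam2, muF 0 = lam0
    · have hl01 : ∀ r', lam (Fin.cons 0 r') = lam (Fin.cons 1 r') := by
        intro r'
        exact f2_add_eq_zero (congrFun (muF_one m lam ▸ h1) r')
      have hl02 : ∀ r', lam (Fin.cons 0 r') = lam (Fin.cons 2 r') := by
        intro r'
        exact f2_add_eq_zero (congrFun (muF_two m lam ▸ h2) r')
      have hmu0 : ∀ r', muF m lam 0 r' = lam (Fin.cons 0 r') := by
        intro r'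
        rw [congrFun (muF_zero m lam) r', ← hl01 r', ← hl02 r']
        generalize lam (Fin.cons 0 r') = u
        revert u; decide
      have hsupp : ∀ r', muF m lam 0 r' ≠ 0 →
          a ≤ hammingNorm r' ∧ hammingNorm r' ≤ b - 1 := by
        intro r' h
        rw [hmu0 r'] at h
        have ha := hs0' r' h
        have hb' := hsz 1 (by decide) r' (by rw [← hl01 r']; exact h)
        omega
      have := ih (b-1) (by omega) a (muF m lam 0) hsupp (by rw [Ne, hziff]; exact h0)
      rw [hwt, h1, h2, Matrix.zero_vecMul]
      simp only [hammingNorm_zero, add_zero]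
      calc 2^(a+b-(m+1)) * 3^(m+1-b) ≤ 2^(a+(b-1)-m) * 3^(m-(b-1)) := arith3 m a b hb1 hb
        _ ≤ _ := this
    -- h1 zero only : lam0 = lam1; muF 0 = lam2, muF 2 ∈ [a-1,b-1]
    · have hl01 : ∀ r', lam (Fin.cons 0 r') = lam (Fin.cons 1 r') := by
        intro r'
        exact f2_add_eq_zero (congrFun (muF_one m lam ▸ h1) r')
      have hmu0 : ∀ r', muF m lam 0 r' = lam (Fin.cons 2 r') := by
        intro r'
        rw [congrFun (muF_zero m lam) r', ← hl01 r']
        exact f2_uuw _ _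
      have hsupp0 : ∀ r', muF m lam 0 r' ≠ 0 →
          a - 1 ≤ hammingNorm r' ∧ hammingNorm r' ≤ b - 1 := by
        intro r' h; rw [hmu0 r'] at h; exact hsz 2 (by decide) r' h
      have hsupp2 : ∀ r', muF m lam 2 r' ≠ 0 →
          a - 1 ≤ hammingNorm r' ∧ hammingNorm r' ≤ b - 1 := by
        intro r' h
        rw [congrFun (muF_two m lam) r'] at h
        have h3 : lam (Fin.cons 0 r') ≠ 0 ∨ lam (Fin.cons 2 r') ≠ 0 := by
          by_contra hAll
          push_neg at hAll
          apply h
          rw [hAll.1, hAll.2, add_zero]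
        rcases h3 with h' | h'
        · have ha := hs0' r' h'
          have hb' := hsz 1 (by decide) r' (by rw [← hl01 r']; exact h')
          omega
        · exact hsz 2 (by decide) r' h'
      have w0 := ih (b-1) (by omega) (a-1) (muF m lam 0) hsupp0 (by rw [Ne, hziff]; exact h0)
      have w2 := ih (b-1) (by omega) (a-1) (muF m lam 2) hsupp2 (by rw [Ne, hziff]; exact h2)
      rw [hwt, h1, Matrix.zero_vecMul]
      simp only [hammingNorm_zero, add_zero, zero_add]
      calc 2^(a+b-(m+1)) * 3^(m+1-b) ≤ 2 * (2^(a-1+(b-1)-m) * 3^(m-(b-1))) := arith2 m a b hb1 hb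
        _ = 2^(a-1+(b-1)-m) * 3^(m-(b-1)) + 2^(a-1+(b-1)-m) * 3^(m-(b-1)) := by ring
        _ ≤ _ := Nat.add_le_add w0 w2
    -- h2 zero only : lam0 = lam2; muF 0 = lam1, muF 1 supp ⊆ [a-1,b-1]
    · have hl02 : ∀ r', lam (Fin.cons 0 r') = lam (Fin.cons 2 r') := by
        intro r'
        exact f2_add_eq_zero (congrFun (muF_two m lam ▸ h2) r')
      have hmu0 : ∀ r', muF m lam 0 r' = lam (Fin.cons 1 r') := by
        intro r'
        rw [congrFun (muF_zero m lam) r']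
        rw [← hl02 r']
        generalize lam (Fin.cons 0 r') = u
        generalize lam (Fin.cons 1 r') = v
        revert u v; decide
      have hsupp0 : ∀ r', muF m lam 0 r' ≠ 0 →
          a - 1 ≤ hammingNorm r' ∧ hammingNorm r' ≤ b - 1 := by
        intro r' h; rw [hmu0 r'] at h; exact hsz 1 (by decide) r' h
      have hsupp1 : ∀ r', muF m lam 1 r' ≠ 0 →
          a - 1 ≤ hammingNorm r' ∧ hammingNorm r' ≤ b - 1 := by
        intro r' h
        rw [congrFun (muF_one m lam) r'] at h
        have h3 : lam (Fin.cons 0 r') ≠ 0 ∨ lam (Fin.cons 1 r') ≠ 0 := by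
          by_contra hAll
          push_neg at hAll
          apply h
          rw [hAll.1, hAll.2, add_zero]
        rcases h3 with h' | h'
        · have ha := hs0' r' h'
          have hb' := hsz 2 (by decide) r' (by rw [← hl02 r']; exact h')
          omega
        · exact hsz 1 (by decide) r' h'
      have w0 := ih (b-1) (by omega) (a-1) (muF m lam 0) hsupp0 (by rw [Ne, hziff]; exact h0)
      have w1 := ih (b-1) (by omega) (a-1) (muF m lam 1) hsupp1 (by rw [Ne, hziff]; exact h1)
      rw [hwt, h2, Matrix.zero_vecMul]
      simp only [hammingNorm_zero, add_zero]
      calc 2^(a+b-(m+1)) * 3^(m+1-b) ≤ 2 * (2^(a-1+(b-1)-m) * 3^(m-(b-1))) := arith2 m a b hb1 hb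
        _ = 2^(a-1+(b-1)-m) * 3^(m-(b-1)) + 2^(a-1+(b-1)-m) * 3^(m-(b-1)) := by ring
        _ ≤ _ := Nat.add_le_add w0 w1
    -- none zero
    · have w0 := ih (min b m) (min_le_right b m) (a-1) (muF m lam 0) (hsmu 0)
        (by rw [Ne, hziff]; exact h0)
      have w1 := ih (min b m) (min_le_right b m) (a-1) (muF m lam 1) (hsmu 1)
        (by rw [Ne, hziff]; exact h1)
      have w2 := ih (min b m) (min_le_right b m) (a-1) (muF m lam 2) (hsmu 2)
        (by rw [Ne, hziff]; exact h2)
      rw [hwt]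
      calc 2^(a+b-(m+1)) * 3^(m+1-b)
          ≤ 3 * (2^(a-1 + min b m - m) * 3^(m - min b m)) := arith1 m a b hb
        _ = 2^(a-1 + min b m - m) * 3^(m - min b m) + 2^(a-1 + min b m - m) * 3^(m - min b m)
            + 2^(a-1 + min b m - m) * 3^(m - min b m) := by ring
        _ ≤ _ := Nat.add_le_add (Nat.add_le_add w0 w1) w2


-- monotone weight function
lemma fw_anti (m : ℕ) : ∀ w w', w ≤ w' → w' ≤ m → 2^w' * 3^(m-w') ≤ 2^w * 3^(m-w) := by
  intro w w' hww' hw'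
  obtain ⟨d, rfl⟩ := Nat.exists_eq_add_of_le hww'
  clear hww'
  induction d with
  | zero => simp
  | succ d ihd =>
    have h1 : w + d ≤ m := by omega
    refine le_trans ?_ (ihd (by omega))
    rw [show w + (d+1) = (w+d)+1 from by omega, pow_succ,
      show m - (w+d) = (m - (w+d+1)) + 1 from by omega, pow_succ]
    calc 2^(w+d) * 2 * 3^(m-(w+d+1)) ≤ 2^(w+d) * 3 * 3^(m-(w+d+1)) := by
          apply Nat.mul_le_mul_right
          exact Nat.mul_le_mul_left _ (by norm_num)
      _ = 2^(w+d) * (3^(m-(w+d+1)) * 3) := by ring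

lemma fw_lt (m w w' : ℕ) (h : w < w') (hw' : w' ≤ m) :
    2^w' * 3^(m-w') < 2^w * 3^(m-w) := by
  have h1 : 2^w' * 3^(m-w') ≤ 2^(w+1) * 3^(m-(w+1)) := fw_anti m (w+1) w' h hw'
  refine lt_of_le_of_lt h1 ?_
  rw [pow_succ, show m - w = (m - (w+1)) + 1 from by omega, pow_succ]
  nlinarith [pow_pos (by norm_num : (0:ℕ) < 2) w, pow_pos (by norm_num : (0:ℕ) < 3) (m-(w+1))]

lemma weight_cond_iff (m a b w : ℕ) (hab : a ≤ b) (hb : b ≤ m) (hw : w ≤ m) :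
    (2^b * 3^(m-b) ≤ 2^w * 3^(m-w) ∧ 2^w * 3^(m-w) ≤ 2^a * 3^(m-a)) ↔ (a ≤ w ∧ w ≤ b) := by
  constructor
  · rintro ⟨h1, h2⟩
    constructor
    · by_contra h
      push_neg at h
      exact absurd h2 (not_le.2 (fw_lt m w a h (le_trans hab hb)))
    · by_contra h
      push_neg at h
      exact absurd h1 (not_le.2 (fw_lt m b w h hw))
  · rintro ⟨h1, h2⟩
    exact ⟨fw_anti m w b h2 hb, fw_anti m a w h1 hw⟩

def wtSet (m a b : ℕ) : Set (Fin m → ZMod 3) :=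
  {r | a ≤ hammingNorm r ∧ hammingNorm r ≤ b}

def N (m a b : ℕ) : ℕ := ((Finset.univ : Finset (Fin m → ZMod 3)).filter
  (fun r => a ≤ hammingNorm r ∧ hammingNorm r ≤ b)).card

lemma BiD_eq_span (m a b : ℕ) (hab : a ≤ b) (hb : b ≤ m) :
    BiD m a b = Submodule.span F2 (A3pow m '' wtSet m a b) := by
  rw [BiD]
  congr 1
  ext x
  simp only [Set.mem_setOf_eq, Set.mem_image]
  constructor
  · rintro ⟨r, hcond, rfl⟩
    rw [hammingNorm_A3pow] at hcond
    exact ⟨r, (weight_cond_iff m a b (hammingNorm r) hab hb (hammingNorm_le' r)).1 hcond, rfl⟩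
  · rintro ⟨r, hr, rfl⟩
    refine ⟨r, ?_, rfl⟩
    rw [hammingNorm_A3pow]
    exact (weight_cond_iff m a b (hammingNorm r) hab hb (hammingNorm_le' r)).2 hr

lemma rows_linearIndependent (m : ℕ) :
    LinearIndependent F2 (fun r : Fin m → ZMod 3 => A3pow m r) := by
  rw [Fintype.linearIndependent_iff]
  intro g hg
  have h : Matrix.vecMul g (A3pow m) = Matrix.vecMul 0 (A3pow m) := by
    rw [Matrix.zero_vecMul]
    rw [← hg]
    funext c
    rw [Finset.sum_apply]
    rw [Matrix.vecMul, dotProduct]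
    exact Finset.sum_congr rfl (fun r _ => by rw [Pi.smul_apply, smul_eq_mul])
  intro i
  rw [vecMul_A3pow_injective m h]
  rfl

lemma finrank_BiD (m a b : ℕ) (hab : a ≤ b) (hb : b ≤ m) :
    Module.finrank F2 (BiD m a b) = N m a b := by
  rw [BiD_eq_span m a b hab hb]
  classical
  have hinj : Function.Injective (fun r : Fin m → ZMod 3 => A3pow m r) :=
    (rows_linearIndependent m).injective
  have li2 : LinearIndependent F2 (fun t : wtSet m a b => A3pow m (t : Fin m → ZMod 3)) :=
    (rows_linearIndependent m).comp _ Subtype.val_injective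
  have hrange : A3pow m '' wtSet m a b
      = Set.range (fun t : wtSet m a b => A3pow m (t : Fin m → ZMod 3)) := by
    exact Set.image_eq_range _ _
  have li3 : LinearIndependent F2 (Subtype.val : (A3pow m '' wtSet m a b) → _) := by
    rw [hrange]
    exact (linearIndepOn_id_range_iff li2.injective).mpr li2
  rw [finrank_span_set_eq_card li3]
  erw [Set.toFinset_image]
  rw [Finset.card_image_of_injective _ hinj]
  rw [N]
  congr 1
  ext r
  simp only [Set.mem_toFinset]
  simp [wtSet]

lemma mem_span_rows {m a b : ℕ} {x : (Fin m → ZMod 3) → F2}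
    (hx : x ∈ Submodule.span F2 (A3pow m '' wtSet m a b)) :
    ∃ lam : (Fin m → ZMod 3) → F2, (∀ r, lam r ≠ 0 → r ∈ wtSet m a b)
      ∧ x = Matrix.vecMul lam (A3pow m) := by
  classical
  induction hx using Submodule.span_induction with
  | mem y hy =>
    obtain ⟨r, hr, rfl⟩ := hy
    refine ⟨Pi.single r 1, ?_, ?_⟩
    · intro r' h
      by_cases hr' : r' = r
      · subst hr'; exact hr
      · exact absurd (Pi.single_eq_of_ne hr' 1) h
    · funext c
      rw [Matrix.vecMul, dotProduct]
      rw [Finset.sum_eq_single r]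
      · rw [Pi.single_eq_same, one_mul]
      · intro i _ hi; rw [Pi.single_eq_of_ne hi, zero_mul]
      · intro h; exact absurd (Finset.mem_univ _) h
  | zero => exact ⟨0, fun r h => absurd rfl h, by rw [Matrix.zero_vecMul]⟩
  | add y z _ _ ihy ihz =>
    obtain ⟨ly, hly, rfl⟩ := ihy
    obtain ⟨lz, hlz, rfl⟩ := ihz
    refine ⟨ly + lz, ?_, by rw [Matrix.add_vecMul]⟩
    intro r h
    by_cases hy0 : ly r = 0
    · exact hlz r (by intro h0; apply h; rw [Pi.add_apply, hy0, h0, add_zero])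
    · exact hly r hy0
  | smul c y _ ihy =>
    obtain ⟨ly, hly, rfl⟩ := ihy
    refine ⟨c • ly, ?_, (Matrix.smul_vecMul c ly (A3pow m)).symm⟩
    intro r h
    apply hly r
    intro h0
    apply h
    rw [Pi.smul_apply, h0, smul_zero]

lemma minDist_BiD_ge (m a b : ℕ) (hab : a ≤ b) (hb : b ≤ m) :
    2^(a+b-m) * 3^(m-b) ≤ minDist (BiD m a b) := by
  classical
  obtain ⟨r₀, hr₀⟩ := exists_weight m b hb
  have hrow_mem : A3pow m r₀ ∈ BiD m a b := by
    apply Submodule.subset_span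
    refine ⟨r₀, ?_, rfl⟩
    rw [hammingNorm_A3pow, hr₀]
    exact ⟨le_refl _, fw_anti m a b hab hb⟩
  have hrow_ne : A3pow m r₀ ≠ 0 := by
    intro h
    have : hammingNorm (A3pow m r₀) = 0 := by rw [h]; simp
    rw [hammingNorm_A3pow, hr₀] at this
    have h2 : 0 < 2^b * 3^(m-b) := by positivity
    omega
  have hne : {d : ℕ | ∃ x ∈ BiD m a b, x ≠ 0 ∧ hammingNorm x = d}.Nonempty :=
    ⟨hammingNorm (A3pow m r₀), ⟨A3pow m r₀, hrow_mem, hrow_ne, rfl⟩⟩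
  rw [minDist]
  obtain ⟨x, hxmem, hxne, hxwt⟩ := Nat.sInf_mem hne
  rw [← hxwt]
  rw [BiD_eq_span m a b hab hb] at hxmem
  obtain ⟨lam, hsupp, rfl⟩ := mem_span_rows hxmem
  exact key_s18 m b hb a lam (fun r h => hsupp r h) hxne

lemma minDist_BiD_le (m a b : ℕ) (hab : a ≤ b) (hb : b ≤ m) :
    minDist (BiD m a b) ≤ 3^m := by
  obtain ⟨r₀, hr₀⟩ := exists_weight m b hb
  have hrow_mem : A3pow m r₀ ∈ BiD m a b := by
    apply Submodule.subset_span
    refine ⟨r₀, ?_, rfl⟩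
    rw [hammingNorm_A3pow, hr₀]
    exact ⟨le_refl _, fw_anti m a b hab hb⟩
  have hrow_ne : A3pow m r₀ ≠ 0 := by
    intro h
    have : hammingNorm (A3pow m r₀) = 0 := by rw [h]; simp
    rw [hammingNorm_A3pow, hr₀] at this
    have h2 : 0 < 2^b * 3^(m-b) := by positivity
    omega
  have hmem : hammingNorm (A3pow m r₀)
      ∈ {d : ℕ | ∃ x ∈ BiD m a b, x ≠ 0 ∧ hammingNorm x = d} :=
    ⟨A3pow m r₀, hrow_mem, hrow_ne, rfl⟩
  rw [minDist]
  refine le_trans (Nat.sInf_le hmem) ?_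
  rw [hammingNorm_A3pow, hr₀]
  calc 2^b * 3^(m-b) ≤ 2^0 * 3^(m-0) := fw_anti m 0 b (Nat.zero_le _) hb
    _ = 3^m := by norm_num


lemma cnt_pos (m w : ℕ) (hw : w ≤ m) : 0 < cnt m w := by
  rw [cnt_choose]
  exact Nat.mul_pos (Nat.choose_pos hw) (Nat.pow_pos (by norm_num))

lemma cnt_eq_zero (m w : ℕ) (hw : m < w) : cnt m w = 0 := by
  rw [cnt, Finset.card_eq_zero, Finset.filter_eq_empty_iff]
  intro r _
  have := hammingNorm_le' r
  omega

lemma cnt_ratio (m w : ℕ) : cnt m (w+1) * (w+1) = cnt m w * (2 * (m - w)) := by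
  rw [cnt_choose, cnt_choose]
  have h := Nat.choose_succ_right_eq m w
  calc Nat.choose m (w+1) * 2^(w+1) * (w+1) = (Nat.choose m (w+1) * (w+1)) * 2^(w+1) := by ring
    _ = Nat.choose m w * (m - w) * 2^(w+1) := by rw [h]
    _ = Nat.choose m w * 2^w * (2 * (m-w)) := by rw [pow_succ]; ring

lemma sum_cnt (m : ℕ) : ∑ w ∈ Finset.range (m+1), cnt m w = 3^m := by
  have h : ∀ w, cnt m w = ∑ r : Fin m → ZMod 3, if hammingNorm r = w then 1 else 0 := by
    intro w; rw [cnt, Finset.card_filter]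
  simp_rw [h]
  rw [Finset.sum_comm]
  have h2 : ∀ r : Fin m → ZMod 3,
      (∑ w ∈ Finset.range (m+1), if hammingNorm r = w then 1 else 0) = 1 := by
    intro r
    rw [Finset.sum_ite_eq (Finset.range (m+1)) (hammingNorm r) (fun _ => 1)]
    rw [if_pos (Finset.mem_range.2 (by have := hammingNorm_le' r; omega))]
  rw [Finset.sum_congr rfl (fun r _ => h2 r)]
  simp [card_pi3]

-- existence of a mode
lemma exists_mode (m : ℕ) : ∃ w₀, w₀ ≤ m ∧ ∀ w, cnt m w ≤ cnt m w₀ := by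
  obtain ⟨w₀, hmem, hmax⟩ := Finset.exists_max_image (Finset.range (m+1)) (cnt m)
    ⟨0, Finset.mem_range.2 (by omega)⟩
  refine ⟨w₀, by have := Finset.mem_range.1 hmem; omega, fun w => ?_⟩
  rcases le_or_gt w m with h | h
  · exact hmax w (Finset.mem_range.2 (by omega))
  · rw [cnt_eq_zero m w h]; exact Nat.zero_le _

-- mode location
lemma mode_loc (m w₀ : ℕ) (hw₀ : w₀ ≤ m) (hmax : ∀ w, cnt m w ≤ cnt m w₀) :
    2*m ≤ 3*w₀ + 1 ∧ 3*w₀ ≤ 2*m + 2 := by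
  have hpos : 0 < cnt m w₀ := cnt_pos m w₀ hw₀
  constructor
  · -- from ratio at w₀
    have h1 : cnt m (w₀+1) * (w₀+1) = cnt m w₀ * (2 * (m - w₀)) := cnt_ratio m w₀
    have h2 : cnt m (w₀+1) * (w₀+1) ≤ cnt m w₀ * (w₀+1) :=
      Nat.mul_le_mul_right _ (hmax (w₀+1))
    have h3 : cnt m w₀ * (2 * (m - w₀)) ≤ cnt m w₀ * (w₀ + 1) := by omega
    have h4 : 2 * (m - w₀) ≤ w₀ + 1 := Nat.le_of_mul_le_mul_left h3 hpos
    omega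
  · rcases Nat.eq_zero_or_pos w₀ with h | h
    · omega
    · have h1 : cnt m ((w₀-1)+1) * ((w₀-1)+1) = cnt m (w₀-1) * (2 * (m - (w₀-1))) :=
        cnt_ratio m (w₀-1)
      rw [show w₀ - 1 + 1 = w₀ from by omega] at h1
      have h2 : cnt m (w₀-1) * (2 * (m - (w₀-1))) ≤ cnt m w₀ * (2 * (m - (w₀-1))) :=
        Nat.mul_le_mul_right _ (hmax (w₀-1))
      have h3 : cnt m w₀ * w₀ ≤ cnt m w₀ * (2 * (m - (w₀-1))) := by omega
      have h4 : w₀ ≤ 2 * (m - (w₀-1)) := Nat.le_of_mul_le_mul_left h3 hpos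
      omega

-- per-step ratio bound within window (ℕ form)
lemma window_step (m w₀ K w : ℕ) (hK : 1 ≤ K) (hm : 9*K^2 + 11*K + 5 ≤ m)
    (hloc : 2*m ≤ 3*w₀ + 1 ∧ 3*w₀ ≤ 2*m + 2) (hw : w₀ ≤ w) (hw2 : w < w₀ + K) :
    cnt m w * (2*K - 1) ≤ cnt m (w+1) * (2*K) := by
  have hr := cnt_ratio m w
  have hKsq : K ≤ K^2 := Nat.le_self_pow (by norm_num) K
  have hwm : w + 1 ≤ m := by nlinarith [hloc.2]
  obtain ⟨e, he⟩ : ∃ e, m = w + e := Nat.exists_eq_add_of_le (by omega)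
  have he1 : 1 ≤ e := by omega
  -- key numeric inequality : (2K-1)*(w+1) ≤ 2*(m-w)*(2K)
  have h1 : w + 1 ≤ 2*e + 3*K := by
    have q1 : 3*w + 3 ≤ 3*w₀ + 3*K := by omega
    have q2 : 3*w₀ ≤ 2*m + 2 := hloc.2
    omega
  have h2 : 6*K^2 + 4*K ≤ 2*e := by
    have q1 : 3*w ≤ 2*m + 3*K - 1 := by
      have := hloc.2; omega
    have q2 : 9*K^2 + 8*K + 6 ≤ 3*e := by omega
    nlinarith
  have h3 : 3*K*(2*K-1) ≤ 2*e := by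
    have q : 3*K*(2*K-1) ≤ 6*K^2 := by
      calc 3*K*(2*K-1) ≤ 3*K*(2*K) := Nat.mul_le_mul_left _ (by omega)
        _ = 6*K^2 := by ring
    linarith
  have hnum : (2*K - 1) * (w+1) ≤ 2 * (m - w) * (2*K) := by
    rw [show m - w = e from by omega]
    calc (2*K-1)*(w+1) ≤ (2*K-1)*(2*e+3*K) := Nat.mul_le_mul_left _ h1
      _ ≤ 2*e*(2*K) := by
          have expand1 : (2*K-1)*(2*e+3*K) = 2*e*(2*K-1) + 3*K*(2*K-1) := by ring
          have expand2 : 2*e*(2*K) = 2*e*(2*K-1) + 2*e*((2*K) - (2*K-1)) := by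
            rw [← Nat.mul_add, Nat.add_sub_cancel' (by omega : 2*K-1 ≤ 2*K)]
          have hone : (2*K) - (2*K-1) = 1 := by omega
          rw [expand1, expand2, hone, mul_one]
          omega
  have h1 : cnt m w * ((2*K - 1) * (w+1)) ≤ cnt m w * (2 * (m - w) * (2*K)) :=
    Nat.mul_le_mul_left _ hnum
  have h2 : cnt m w * (2 * (m - w) * (2*K)) = (cnt m (w+1) * (2*K)) * (w+1) := by
    calc cnt m w * (2 * (m - w) * (2*K)) = (cnt m w * (2 * (m - w))) * (2*K) := by ring
      _ = (cnt m (w+1) * (w+1)) * (2*K) := by rw [hr]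
      _ = (cnt m (w+1) * (2*K)) * (w+1) := by ring
  have h3 : (cnt m w * (2*K - 1)) * (w+1) ≤ (cnt m (w+1) * (2*K)) * (w+1) := by
    calc (cnt m w * (2*K-1)) * (w+1) = cnt m w * ((2*K-1)*(w+1)) := by ring
      _ ≤ cnt m w * (2 * (m - w) * (2*K)) := h1
      _ = (cnt m (w+1) * (2*K)) * (w+1) := h2
  exact Nat.le_of_mul_le_mul_right h3 (by omega)

lemma window_chain (m w₀ K : ℕ) (hK : 1 ≤ K) (hm : 9*K^2 + 11*K + 5 ≤ m)
    (hloc : 2*m ≤ 3*w₀ + 1 ∧ 3*w₀ ≤ 2*m + 2) :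
    ∀ j ≤ K, cnt m w₀ * (2*K - 1)^j ≤ cnt m (w₀ + j) * (2*K)^j := by
  intro j
  induction j with
  | zero => intro _; simp
  | succ j ihj =>
    intro hj
    have hstep := window_step m w₀ K (w₀ + j) hK hm hloc (by omega) (by omega)
    calc cnt m w₀ * (2*K-1)^(j+1) = (cnt m w₀ * (2*K-1)^j) * (2*K-1) := by
          rw [pow_succ]; ring
      _ ≤ (cnt m (w₀+j) * (2*K)^j) * (2*K-1) := Nat.mul_le_mul_right _ (ihj (by omega))
      _ = (cnt m (w₀+j) * (2*K-1)) * (2*K)^j := by ring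
      _ ≤ (cnt m (w₀+j+1) * (2*K)) * (2*K)^j := Nat.mul_le_mul_right _ hstep
      _ = cnt m (w₀+(j+1)) * (2*K)^(j+1) := by rw [pow_succ, ← add_assoc]; ring

lemma window_sum_le (m w₀ K : ℕ) (hwK : w₀ + K ≤ m) :
    ∑ j ∈ Finset.range (K+1), cnt m (w₀ + j) ≤ 3^m := by
  rw [← sum_cnt m]
  have h1 : ∑ j ∈ Finset.range (K+1), cnt m (w₀ + j)
      = ∑ w ∈ (Finset.range (K+1)).image (w₀ + ·), cnt m w := by
    rw [Finset.sum_image]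
    intro x _ y _ h
    simp only at h
    omega
  rw [h1]
  apply Finset.sum_le_sum_of_subset
  intro w hw
  simp only [Finset.mem_image, Finset.mem_range] at hw ⊢
  obtain ⟨j, hj, rfl⟩ := hw
  omega

lemma maxcnt_small (ε : ℝ) (hε : 0 < ε) :
    ∃ M₀ : ℕ, ∀ m, M₀ ≤ m → ∀ w, (cnt m w : ℝ) ≤ ε * 3^m := by
  classical
  set K : ℕ := max 1 ⌈2/ε⌉₊ with hKdef
  have hK1 : 1 ≤ K := le_max_left _ _
  have hKε : 2/ε ≤ (K : ℝ) := le_trans (Nat.le_ceil _) (by exact_mod_cast le_max_right _ _)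
  refine ⟨9*K^2 + 11*K + 5, fun m hm w => ?_⟩
  obtain ⟨w₀, hw₀m, hmax⟩ := exists_mode m
  have hloc := mode_loc m w₀ hw₀m hmax
  have hKsq : K ≤ K^2 := Nat.le_self_pow (by norm_num) K
  have hwK : w₀ + K ≤ m := by nlinarith [hloc.2]
  -- real chain bound
  have hKpos : (0:ℝ) < 2*K := by positivity
  have hbase0 : (0:ℝ) ≤ 1 - 1/(2*(K:ℝ)) := by
    rw [sub_nonneg, div_le_one hKpos]
    have : (1:ℝ) ≤ (K:ℝ) := by exact_mod_cast hK1
    linarith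
  have hbase1 : 1 - 1/(2*(K:ℝ)) ≤ 1 := by
    have : (0:ℝ) ≤ 1/(2*(K:ℝ)) := by positivity
    linarith
  have hbern : (1:ℝ)/2 ≤ (1 - 1/(2*(K:ℝ)))^K := by
    have h := one_add_mul_le_pow (a := -(1/(2*(K:ℝ)))) (by nlinarith) K
    have hKne : (K:ℝ) ≠ 0 := by positivity
    have heq : (1:ℝ) + (K:ℝ) * (-(1/(2*(K:ℝ)))) = 1/2 := by
      field_simp
      ring
    rw [heq] at h
    simpa [sub_eq_add_neg] using h
  have hcast : ((2*K - 1 : ℕ) : ℝ) = 2*(K:ℝ) - 1 := by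
    push_cast [Nat.cast_sub (by omega : 1 ≤ 2*K)]
    ring
  have hchainR : ∀ j, j ≤ K → (cnt m w₀ : ℝ) * (1 - 1/(2*(K:ℝ)))^j ≤ cnt m (w₀ + j) := by
    intro j hj
    have h := window_chain m w₀ K hK1 hm hloc j hj
    have hR : (cnt m w₀ : ℝ) * (2*(K:ℝ) - 1)^j ≤ (cnt m (w₀+j) : ℝ) * (2*(K:ℝ))^j := by
      have := (Nat.cast_le (α := ℝ)).2 h
      push_cast at this
      rw [← hcast]
      push_cast
      convert this using 2 <;> push_cast [hcast] <;> ring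
    have hfrac : (1 - 1/(2*(K:ℝ))) = (2*(K:ℝ) - 1)/(2*(K:ℝ)) := by
      field_simp
    rw [hfrac, div_pow, ← mul_div_assoc, div_le_iff₀ (by positivity)]
    linarith [hR]
  have hhalf : ∀ j, j ≤ K → (cnt m w₀ : ℝ)/2 ≤ cnt m (w₀ + j) := by
    intro j hj
    refine le_trans ?_ (hchainR j hj)
    have hmono : (1 - 1/(2*(K:ℝ)))^K ≤ (1 - 1/(2*(K:ℝ)))^j :=
      pow_le_pow_of_le_one hbase0 hbase1 hj
    have hc0 : (0:ℝ) ≤ cnt m w₀ := Nat.cast_nonneg _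
    calc (cnt m w₀ : ℝ)/2 = (cnt m w₀) * (1/2) := by ring
      _ ≤ (cnt m w₀) * (1 - 1/(2*(K:ℝ)))^K := by
          apply mul_le_mul_of_nonneg_left hbern hc0
      _ ≤ (cnt m w₀) * (1 - 1/(2*(K:ℝ)))^j := by
          apply mul_le_mul_of_nonneg_left hmono hc0
  have hsum : ((K:ℝ)+1) * ((cnt m w₀ : ℝ)/2) ≤ 3^m := by
    have h1 : ((K:ℝ)+1) * ((cnt m w₀ : ℝ)/2)
        ≤ ∑ j ∈ Finset.range (K+1), (cnt m (w₀+j) : ℝ) := by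
      have := Finset.sum_le_sum (f := fun _ : ℕ => (cnt m w₀ : ℝ)/2)
        (g := fun j => (cnt m (w₀+j) : ℝ)) (s := Finset.range (K+1))
        (fun j hj => hhalf j (by simp only [Finset.mem_range] at hj; omega))
      simpa [Finset.sum_const, Finset.card_range, add_comm, nsmul_eq_mul] using this
    refine le_trans h1 ?_
    have h2 := window_sum_le m w₀ K hwK
    have := (Nat.cast_le (α := ℝ)).2 h2
    push_cast at this
    exact this
  -- conclude
  have hw' : (cnt m w : ℝ) ≤ cnt m w₀ := by exact_mod_cast hmax w
  refine le_trans hw' ?_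
  have hKp1 : (0:ℝ) < (K:ℝ)+1 := by positivity
  have h3 : (cnt m w₀ : ℝ) ≤ 2 * 3^m / ((K:ℝ)+1) := by
    rw [le_div_iff₀ hKp1]
    nlinarith [hsum]
  refine le_trans h3 ?_
  rw [div_le_iff₀ hKp1]
  have h4 : 2/ε < (K:ℝ)+1 := lt_of_le_of_lt hKε (by linarith)
  have h5 : 2 < ε * ((K:ℝ)+1) := by
    rw [div_lt_iff₀ hε] at h4
    linarith [h4]
  have h3m : (0:ℝ) < 3^m := by positivity
  nlinarith [h3m, h5]

lemma cheb (m : ℕ) (P : (Fin m → ZMod 3) → Prop) [DecidablePred P] (c : ℤ)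
    (h : ∀ r, P r → c^2 ≤ (3*(hammingNorm r : ℤ) - 2*m)^2) :
    ((Finset.univ.filter P).card : ℤ) * c^2 ≤ 2*m*3^m := by
  calc ((Finset.univ.filter P).card : ℤ) * c^2
      = ∑ _r ∈ Finset.univ.filter P, c^2 := by
        rw [Finset.sum_const, nsmul_eq_mul]
    _ ≤ ∑ r ∈ Finset.univ.filter P, (3*(hammingNorm r : ℤ) - 2*m)^2 := by
        apply Finset.sum_le_sum
        intro r hr
        exact h r (Finset.mem_filter.1 hr).2
    _ ≤ ∑ r : Fin m → ZMod 3, (3*(hammingNorm r : ℤ) - 2*m)^2 := by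
        apply Finset.sum_le_sum_of_subset_of_nonneg (Finset.filter_subset _ _)
        intro r _ _
        positivity
    _ = 2*(m:ℤ)*3^m := moment2 m


-- ===== CDF counts =====
def Fc (m b : ℕ) : ℕ := ((Finset.univ : Finset (Fin m → ZMod 3)).filter
  (fun r => hammingNorm r ≤ b)).card

lemma Fc_mono (m : ℕ) {b b' : ℕ} (h : b ≤ b') : Fc m b ≤ Fc m b' := by
  apply Finset.card_le_card
  intro r hr
  simp only [Finset.mem_filter, Finset.mem_univ, true_and] at hr ⊢
  omega

lemma Fc_last (m : ℕ) : Fc m m = 3^m := by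
  rw [Fc, Finset.filter_true_of_mem (fun r _ => hammingNorm_le' r)]
  simp [card_pi3]

lemma Fc_le (m b : ℕ) : Fc m b ≤ 3^m := by
  have h := Finset.card_filter_le (Finset.univ : Finset (Fin m → ZMod 3))
    (fun r => hammingNorm r ≤ b)
  exact h.trans (by rw [Finset.card_univ, card_pi3])

lemma Fc_zero (m : ℕ) : Fc m 0 = 1 := by
  rw [Fc]
  rw [show (Finset.univ.filter (fun r : Fin m → ZMod 3 => hammingNorm r ≤ 0))
      = {fun _ => 0} from ?_]
  · simp
  · ext r
    simp only [Finset.mem_filter, Finset.mem_univ, true_and, Finset.mem_singleton,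
      Nat.le_zero, hammingNorm_eq_zero]
    constructor
    · intro h; funext i; exact congrFun h i
    · intro h; rw [h]; rfl

lemma Fc_indicator (m b : ℕ) :
    Fc m b = ∑ r : Fin m → ZMod 3, if hammingNorm r ≤ b then 1 else 0 := by
  rw [Fc, Finset.card_filter]

lemma cnt_indicator (m w : ℕ) :
    cnt m w = ∑ r : Fin m → ZMod 3, if hammingNorm r = w then 1 else 0 := by
  rw [cnt, Finset.card_filter]

lemma Fc_split (m b : ℕ) (hb : 1 ≤ b) : Fc m b = Fc m (b-1) + cnt m b := by
  rw [Fc_indicator, Fc_indicator, cnt_indicator, ← Finset.sum_add_distrib]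
  apply Finset.sum_congr rfl
  intro r _
  by_cases h1 : hammingNorm r ≤ b - 1 <;> by_cases h2 : hammingNorm r = b <;>
    simp [h1, h2] <;> omega

lemma N_add_Fc (m a b : ℕ) (ha : 1 ≤ a) (hab : a ≤ b) :
    N m a b + Fc m (a-1) = Fc m b := by
  rw [N, Finset.card_filter, Fc_indicator, Fc_indicator, ← Finset.sum_add_distrib]
  apply Finset.sum_congr rfl
  intro r _
  by_cases h1 : a ≤ hammingNorm r ∧ hammingNorm r ≤ b <;>
    by_cases h2 : hammingNorm r ≤ a - 1 <;> by_cases h3 : hammingNorm r ≤ b <;>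
    simp [h1, h2, h3] <;> omega

-- ===== real Chebyshev =====
lemma chebR (m : ℕ) (P : (Fin m → ZMod 3) → Prop) [DecidablePred P] (t : ℝ)
    (ht : 0 ≤ t) (h : ∀ r, P r → t ≤ |3*(hammingNorm r : ℝ) - 2*m|) :
    ((Finset.univ.filter P).card : ℝ) * t^2 ≤ 2*m*3^m := by
  have hm : (∑ r : Fin m → ZMod 3, (3*(hammingNorm r : ℝ) - 2*m)^2) = 2*(m:ℝ)*3^m := by
    have := moment2 m
    have h2 := congrArg (fun z : ℤ => (z : ℝ)) this
    push_cast at h2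
    convert h2 using 2
  calc ((Finset.univ.filter P).card : ℝ) * t^2
      = ∑ _r ∈ Finset.univ.filter P, t^2 := by rw [Finset.sum_const, nsmul_eq_mul]
    _ ≤ ∑ r ∈ Finset.univ.filter P, (3*(hammingNorm r : ℝ) - 2*m)^2 := by
        apply Finset.sum_le_sum
        intro r hr
        have := h r (Finset.mem_filter.1 hr).2
        calc t^2 ≤ |3*(hammingNorm r : ℝ) - 2*m|^2 := by
              apply pow_le_pow_left₀ ht this
          _ = (3*(hammingNorm r : ℝ) - 2*m)^2 := sq_abs _
    _ ≤ ∑ r : Fin m → ZMod 3, (3*(hammingNorm r : ℝ) - 2*m)^2 := by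
        apply Finset.sum_le_sum_of_subset_of_nonneg (Finset.filter_subset _ _)
        intro r _ _
        positivity
    _ = 2*(m:ℝ)*3^m := hm

-- ===== thresholds =====
noncomputable def thr (c : ℝ) (m : ℕ) : ℕ := sInf {b : ℕ | c * 3^m ≤ (Fc m b : ℝ)}

lemma thr_set_nonempty (c : ℝ) (hc : c ≤ 1) (m : ℕ) :
    {b : ℕ | c * 3^m ≤ (Fc m b : ℝ)}.Nonempty := by
  refine ⟨m, ?_⟩
  show c * 3^m ≤ (Fc m m : ℝ)
  rw [Fc_last]
  push_cast
  nlinarith [pow_pos (by norm_num : (0:ℝ) < 3) m]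

lemma thr_mem (c : ℝ) (hc : c ≤ 1) (m : ℕ) : c * 3^m ≤ (Fc m (thr c m) : ℝ) :=
  Nat.sInf_mem (thr_set_nonempty c hc m)

lemma thr_le_self (c : ℝ) (hc : c ≤ 1) (m : ℕ) : thr c m ≤ m :=
  Nat.sInf_le (by
    show c * 3^m ≤ (Fc m m : ℝ)
    rw [Fc_last]; push_cast; nlinarith [pow_pos (by norm_num : (0:ℝ) < 3) m])

lemma thr_mono (c c' : ℝ) (h : c ≤ c') (hc' : c' ≤ 1) (m : ℕ) : thr c m ≤ thr c' m := by
  apply Nat.sInf_le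
  have h1 := thr_mem c' hc' m
  show c * 3^m ≤ (Fc m (thr c' m) : ℝ)
  have h3 : (0:ℝ) ≤ 3^m := by positivity
  nlinarith

lemma thr_not_mem (c : ℝ) (m k : ℕ) (h : k < thr c m) : (Fc m k : ℝ) < c * 3^m := by
  have := Nat.notMem_of_lt_sInf h
  simpa [not_le] using this

-- tail bounds via Chebyshev (multiplied form)
lemma upper_tail (m : ℕ) (δ : ℝ) (hδ : 0 < δ) (b : ℕ) (hb : (2/3 + δ) * m ≤ b) :
    ((3^m - Fc m b : ℕ) : ℝ) * (9*δ^2*(m:ℝ)^2) ≤ 2*m*3^m := by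
  classical
  have hcompl : Fc m b + (Finset.univ.filter
      (fun r : Fin m → ZMod 3 => ¬ hammingNorm r ≤ b)).card = 3^m := by
    rw [Fc, Finset.card_filter_add_card_filter_not]
    simp [card_pi3]
  have hcheb := chebR m (fun r => ¬ hammingNorm r ≤ b) (3*δ*m) (by positivity) ?_
  · have heq : ((3^m - Fc m b : ℕ) : ℝ)
        = ((Finset.univ.filter (fun r : Fin m → ZMod 3 => ¬ hammingNorm r ≤ b)).card : ℝ) := by
      exact_mod_cast congrArg (fun n : ℕ => (n:ℝ)) (by omega :
        3^m - Fc m b = (Finset.univ.filter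
          (fun r : Fin m → ZMod 3 => ¬ hammingNorm r ≤ b)).card)
    rw [heq]
    calc ((Finset.univ.filter (fun r : Fin m → ZMod 3 => ¬ hammingNorm r ≤ b)).card : ℝ)
          * (9*δ^2*(m:ℝ)^2)
        = ((Finset.univ.filter (fun r : Fin m → ZMod 3 => ¬ hammingNorm r ≤ b)).card : ℝ)
          * (3*δ*m)^2 := by ring_nf
      _ ≤ 2*(m:ℝ)*3^m := hcheb
  · intro r hr
    push_neg at hr
    have h1 : (b:ℝ) + 1 ≤ (hammingNorm r : ℝ) := by exact_mod_cast hr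
    have h2 : 3*δ*(m:ℝ) ≤ 3*(hammingNorm r : ℝ) - 2*m := by nlinarith
    exact le_trans h2 (le_abs_self _)

lemma lower_tail (m : ℕ) (δ : ℝ) (hδ : 0 < δ) (a : ℕ) (ha : (a:ℝ) ≤ (2/3 - δ) * m) :
    (Fc m a : ℝ) * (9*δ^2*(m:ℝ)^2) ≤ 2*m*3^m := by
  classical
  have hcheb := chebR m (fun r => hammingNorm r ≤ a) (3*δ*m) (by positivity) ?_
  · calc (Fc m a : ℝ) * (9*δ^2*(m:ℝ)^2)
        = (Fc m a : ℝ) * (3*δ*m)^2 := by ring_nf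
      _ ≤ 2*(m:ℝ)*3^m := hcheb
  · intro r hr
    have h1 : (hammingNorm r : ℝ) ≤ a := by exact_mod_cast hr
    have h2 : 3*δ*(m:ℝ) ≤ -(3*(hammingNorm r : ℝ) - 2*m) := by nlinarith
    exact le_trans h2 (neg_le_abs _)

lemma thr_bounds (c : ℝ) (hc0 : 0 < c) (hc1 : c < 1) (δ : ℝ) (hδ0 : 0 < δ) (hδ3 : δ < 1/3) :
    ∃ M : ℕ, 1 ≤ M ∧ ∀ m, M ≤ m →
      (2/3 - δ) * m < thr c m ∧ (thr c m : ℝ) ≤ (2/3 + δ) * m + 1 := by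
  classical
  set γ : ℝ := min c (1-c) with hγdef
  have hγ0 : 0 < γ := lt_min hc0 (by linarith)
  refine ⟨⌈2/(9*δ^2*γ)⌉₊ + 1, by omega, fun m hm => ?_⟩
  have hm1 : 1 ≤ m := by omega
  have hmR : (0:ℝ) < m := by exact_mod_cast hm1
  have hmbig : 2 < 9*δ^2*γ*m := by
    have h1 : 2/(9*δ^2*γ) < m := by
      have := Nat.le_ceil (2/(9*δ^2*γ))
      have h2 : (⌈2/(9*δ^2*γ)⌉₊ : ℝ) + 1 ≤ m := by exact_mod_cast hm
      linarith
    have h3 : (0:ℝ) < 9*δ^2*γ := by positivity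
    rw [div_lt_iff₀ h3] at h1
    linarith [h1]
  have h9 : (0:ℝ) < 9*δ^2*(m:ℝ)^2 := by positivity
  have h3m : (0:ℝ) < 3^m := by positivity
  have step1 : 2*(m:ℝ)*3^m < γ * 3^m * (9*δ^2*(m:ℝ)^2) := by
    have hpos : (0:ℝ) < (m:ℝ)*3^m := by positivity
    nlinarith [mul_lt_mul_of_pos_right hmbig hpos]
  constructor
  · -- lower bound
    set a : ℕ := ⌊(2/3 - δ) * m⌋₊ with hadef
    have hx0 : (0:ℝ) ≤ (2/3 - δ) * m := by nlinarith
    have ha : (a:ℝ) ≤ (2/3 - δ) * m := Nat.floor_le hx0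
    have hfl : (2/3 - δ) * m - 1 < a := Nat.sub_one_lt_floor _
    have tail := lower_tail m δ hδ0 a ha
    have hFa : (Fc m a : ℝ) < c * 3^m := by
      have h4 : (Fc m a : ℝ) * (9*δ^2*(m:ℝ)^2) < (γ*3^m) * (9*δ^2*(m:ℝ)^2) := by
        calc (Fc m a : ℝ) * (9*δ^2*(m:ℝ)^2) ≤ 2*(m:ℝ)*3^m := tail
          _ < γ * 3^m * (9*δ^2*(m:ℝ)^2) := step1
      have h5 : (Fc m a : ℝ) < γ*3^m := lt_of_mul_lt_mul_right h4 (le_of_lt h9)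
      have h6 : γ ≤ c := min_le_left _ _
      nlinarith
    have hathr : a < thr c m := by
      by_contra hcon
      push_neg at hcon
      have h7 : (Fc m (thr c m) : ℝ) ≤ Fc m a := by
        exact_mod_cast Fc_mono m hcon
      have h8 := thr_mem c (le_of_lt hc1) m
      linarith
    have : (a:ℝ) + 1 ≤ thr c m := by exact_mod_cast hathr
    linarith
  · -- upper bound
    set b : ℕ := ⌈(2/3 + δ) * m⌉₊ with hbdef
    have hb : (2/3 + δ) * m ≤ b := Nat.le_ceil _
    have hbm : (b:ℝ) < (2/3 + δ) * m + 1 := Nat.ceil_lt_add_one (by nlinarith)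
    have tail := upper_tail m δ hδ0 b hb
    have hcast : ((3^m - Fc m b : ℕ) : ℝ) = (3^m : ℝ) - Fc m b := by
      push_cast [Nat.cast_sub (Fc_le m b)]
      norm_num
    rw [hcast] at tail
    have hFb : c * 3^m ≤ (Fc m b : ℝ) := by
      have h4 : ((3^m : ℝ) - Fc m b) * (9*δ^2*(m:ℝ)^2) < (γ*3^m) * (9*δ^2*(m:ℝ)^2) :=
        lt_of_le_of_lt tail step1
      have h5 : (3^m : ℝ) - Fc m b < γ*3^m := lt_of_mul_lt_mul_right h4 (le_of_lt h9)
      have h6 : γ ≤ 1 - c := min_le_right _ _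
      nlinarith
    have hthrb : thr c m ≤ b := Nat.sInf_le hFb
    have : (thr c m : ℝ) ≤ b := by exact_mod_cast hthrb
    linarith

lemma thr_tendsto (c : ℝ) (hc0 : 0 < c) (hc1 : c < 1) :
    Filter.Tendsto (fun m : ℕ => (thr c m : ℝ)/m) Filter.atTop (nhds (2/3)) := by
  rw [Metric.tendsto_atTop]
  intro ε hε
  set δ : ℝ := min (ε/4) (1/6) with hδdef
  have hδ0 : 0 < δ := lt_min (by linarith) (by norm_num)
  have hδ3 : δ < 1/3 := lt_of_le_of_lt (min_le_right _ _) (by norm_num)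
  obtain ⟨M, hM1, hM⟩ := thr_bounds c hc0 hc1 δ hδ0 hδ3
  refine ⟨max M (⌈2/ε⌉₊ + 1), fun m hm => ?_⟩
  have hmM : M ≤ m := le_trans (le_max_left _ _) hm
  have hm1 : 1 ≤ m := le_trans hM1 hmM
  have hmR : (0:ℝ) < m := by exact_mod_cast hm1
  have hminv : 1/(m:ℝ) ≤ ε/2 := by
    have h1 : (⌈2/ε⌉₊ : ℝ) + 1 ≤ m := by
      exact_mod_cast le_trans (le_max_right _ _) hm
    have h2 : 2/ε < m := lt_of_le_of_lt (Nat.le_ceil _) (by linarith)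
    rw [div_le_div_iff₀ hmR (by linarith : (0:ℝ) < 2)]
    rw [div_lt_iff₀ hε] at h2
    linarith
  obtain ⟨hlo, hhi⟩ := hM m hmM
  have hlo' : 2/3 - δ < (thr c m : ℝ)/m := by
    rw [lt_div_iff₀ hmR]
    exact hlo
  have hhi' : (thr c m : ℝ)/m ≤ 2/3 + δ + 1/m := by
    rw [div_le_iff₀ hmR]
    have : (2/3 + δ + 1/m) * m = (2/3+δ)*m + 1 := by field_simp
    rw [this]
    exact hhi
  rw [Real.dist_eq, abs_lt]
  have hδε : δ ≤ ε/4 := min_le_left _ _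
  constructor <;> nlinarith



-- ====== numeric lemma ======
lemma log_ratio_gt : (0.543 : ℝ) < Real.log 6 / Real.log 27 := by
  have h27 : (0:ℝ) < Real.log 27 := Real.log_pos (by norm_num)
  rw [lt_div_iff₀ h27]
  have h6 : Real.log 6 = Real.log 2 + Real.log 3 := by
    rw [show (6:ℝ) = 2*3 from by norm_num, Real.log_mul two_ne_zero three_ne_zero]
  have h27' : Real.log 27 = 3 * Real.log 3 := by
    rw [show (27:ℝ) = 3^3 from by norm_num, Real.log_pow]
    norm_num
  have hNat : (3:ℝ)^629 < 2^1000 := by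
    have h := (Nat.cast_lt (α := ℝ)).2 (by set_option maxRecDepth 100000 in decide : (3:ℕ)^629 < 2^1000)
    push_cast at h
    exact h
  have hkey : 629 * Real.log 3 < 1000 * Real.log 2 := by
    have := Real.log_lt_log (by positivity : (0:ℝ) < 3^629) hNat
    rw [Real.log_pow, Real.log_pow] at this
    exact_mod_cast this
  rw [h6, h27']
  nlinarith [hkey]

lemma log6_log27 : (2/3 + 2/3 - 1) * (Real.log 2 / Real.log 3) + (1 - 2/3)
    = Real.log 6 / Real.log 27 := by
  have h3 : Real.log 3 ≠ 0 := ne_of_gt (Real.log_pos (by norm_num))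
  have h6 : Real.log 6 = Real.log 2 + Real.log 3 := by
    rw [show (6:ℝ) = 2*3 from by norm_num, Real.log_mul two_ne_zero three_ne_zero]
  have h27' : Real.log 27 = 3 * Real.log 3 := by
    rw [show (27:ℝ) = 3^3 from by norm_num, Real.log_pow]
    norm_num
  rw [h6, h27']
  field_simp
  ring

set_option maxHeartbeats 1000000 in
/-- For any rate `R ∈ (0,1)` there is a sequence of BiD codes with rate converging
to `R`, `r₁/m, r₂/m → 2/3`, and `liminf log d_min / log N ≥ log 6 / log 27 > 0.543`. -/
theorem BiD_asymptotic_minDist (R : ℝ) (hR0 : 0 < R) (hR1 : R < 1) :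
    ∃ r₁ r₂ : ℕ → ℕ,
      (∀ m, r₁ m ≤ r₂ m ∧ r₂ m ≤ m) ∧
      Filter.Tendsto (fun m : ℕ =>
          (Module.finrank F2 (BiD m (r₁ m) (r₂ m)) : ℝ) / 3^m) Filter.atTop (nhds R) ∧
      Filter.Tendsto (fun m : ℕ => (r₁ m : ℝ) / m) Filter.atTop (nhds (2/3)) ∧
      Filter.Tendsto (fun m : ℕ => (r₂ m : ℝ) / m) Filter.atTop (nhds (2/3)) ∧
      Real.log 6 / Real.log 27 ≤
        Filter.liminf (fun m : ℕ =>
          Real.log (minDist (BiD m (r₁ m) (r₂ m))) / Real.log (3^m)) Filter.atTop ∧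
      (0.543 : ℝ) < Real.log 6 / Real.log 27 := by
  classical
  set c₁ : ℝ := (1-R)/2 with hc₁def
  set c₂ : ℝ := (1+R)/2 with hc₂def
  have hc₁0 : 0 < c₁ := by rw [hc₁def]; linarith
  have hc₁1 : c₁ < 1 := by rw [hc₁def]; linarith
  have hc₂0 : 0 < c₂ := by rw [hc₂def]; linarith
  have hc₂1 : c₂ < 1 := by rw [hc₂def]; linarith
  have hc₁₂ : c₁ < c₂ := by rw [hc₁def, hc₂def]; linarith
  refine ⟨thr c₁, thr c₂, ?_, ?_, ?_, ?_, ?_, log_ratio_gt⟩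
  · -- r₁ ≤ r₂ ≤ m
    intro m
    exact ⟨thr_mono c₁ c₂ (le_of_lt hc₁₂) (le_of_lt hc₂1) m, thr_le_self c₂ (le_of_lt hc₂1) m⟩
  · -- rate
    rw [Metric.tendsto_atTop]
    intro ε hε
    obtain ⟨M₀, hM₀⟩ := maxcnt_small (ε/4) (by linarith)
    obtain ⟨M₁, hM₁1, hM₁⟩ := thr_bounds c₁ hc₁0 hc₁1 (1/6) (by norm_num) (by norm_num)
    refine ⟨max M₀ (max M₁ 2), fun m hm => ?_⟩
    have hmM₀ : M₀ ≤ m := le_trans (le_max_left _ _) hm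
    have hmM₁ : M₁ ≤ m := le_trans (le_trans (le_max_left _ _) (le_max_right _ _)) hm
    have hm2 : 2 ≤ m := le_trans (le_trans (le_max_right _ _) (le_max_right _ _)) hm
    have hmR : (0:ℝ) < m := by exact_mod_cast (by omega : 0 < m)
    have h3m : (0:ℝ) < 3^m := by positivity
    -- r₁ ≥ 1
    have hr₁1 : 1 ≤ thr c₁ m := by
      have hlo := (hM₁ m hmM₁).1
      by_contra hcon
      push_neg at hcon
      interval_cases h : thr c₁ m
      · push_cast at hlo
        have : (2:ℝ) ≤ m := by exact_mod_cast hm2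
        nlinarith
    have h12 : thr c₁ m ≤ thr c₂ m := thr_mono c₁ c₂ (le_of_lt hc₁₂) (le_of_lt hc₂1) m
    have h2m : thr c₂ m ≤ m := thr_le_self c₂ (le_of_lt hc₂1) m
    have hr₂1 : 1 ≤ thr c₂ m := le_trans hr₁1 h12
    have hrank := finrank_BiD m (thr c₁ m) (thr c₂ m) h12 h2m
    have hNFc := N_add_Fc m (thr c₁ m) (thr c₂ m) hr₁1 h12
    have hFr2_lo : c₂*3^m ≤ (Fc m (thr c₂ m) : ℝ) := thr_mem c₂ (le_of_lt hc₂1) m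
    have hsplit2 := Fc_split m (thr c₂ m) hr₂1
    have hnm2 : (Fc m (thr c₂ m - 1) : ℝ) < c₂ * 3^m :=
      thr_not_mem c₂ m (thr c₂ m - 1) (by omega)
    have hcnt2 : (cnt m (thr c₂ m) : ℝ) ≤ (ε/4) * 3^m := hM₀ m hmM₀ _
    have hFr2_hi : (Fc m (thr c₂ m) : ℝ) < c₂*3^m + (ε/4)*3^m := by
      have hc : (Fc m (thr c₂ m) : ℝ) = (Fc m (thr c₂ m - 1) : ℝ) + cnt m (thr c₂ m) := by
        exact_mod_cast congrArg (fun n : ℕ => (n:ℝ)) hsplit2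
      rw [hc]
      linarith
    have hsplit1 := Fc_split m (thr c₁ m) hr₁1
    have hnm1 : (Fc m (thr c₁ m - 1) : ℝ) < c₁ * 3^m :=
      thr_not_mem c₁ m (thr c₁ m - 1) (by omega)
    have hFr1_lo : c₁*3^m - (ε/4)*3^m ≤ (Fc m (thr c₁ m - 1) : ℝ) := by
      have hc : (Fc m (thr c₁ m) : ℝ) = (Fc m (thr c₁ m - 1) : ℝ) + cnt m (thr c₁ m) := by
        exact_mod_cast congrArg (fun n : ℕ => (n:ℝ)) hsplit1
      have hmem := thr_mem c₁ (le_of_lt hc₁1) m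
      have hcnt1 : (cnt m (thr c₁ m) : ℝ) ≤ (ε/4) * 3^m := hM₀ m hmM₀ _
      linarith
    have hNr : (N m (thr c₁ m) (thr c₂ m) : ℝ)
        = (Fc m (thr c₂ m) : ℝ) - (Fc m (thr c₁ m - 1) : ℝ) := by
      have := congrArg (fun n : ℕ => (n:ℝ)) hNFc
      push_cast at this
      linarith
    have hRdef : c₂ - c₁ = R := by rw [hc₁def, hc₂def]; ring
    have hNlo : R * 3^m ≤ (N m (thr c₁ m) (thr c₂ m) : ℝ) := by
      rw [hNr]
      nlinarith
    have hNhi : (N m (thr c₁ m) (thr c₂ m) : ℝ) < (R + ε/2) * 3^m := by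
      rw [hNr]
      nlinarith
    have hcast : (Module.finrank F2 (BiD m (thr c₁ m) (thr c₂ m)) : ℝ)
        = (N m (thr c₁ m) (thr c₂ m) : ℝ) := by exact_mod_cast congrArg (fun n : ℕ => (n:ℝ)) hrank
    rw [Real.dist_eq, hcast, abs_lt]
    constructor
    · have : R ≤ (N m (thr c₁ m) (thr c₂ m) : ℝ) / 3^m := by
        rw [le_div_iff₀ h3m]
        linarith
      linarith
    · have : (N m (thr c₁ m) (thr c₂ m) : ℝ) / 3^m < R + ε/2 := by
        rw [div_lt_iff₀ h3m]
        linarith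
      linarith
  · exact thr_tendsto c₁ hc₁0 hc₁1
  · exact thr_tendsto c₂ hc₂0 hc₂1
  · -- liminf
    have h1 := thr_tendsto c₁ hc₁0 hc₁1
    have h2 := thr_tendsto c₂ hc₂0 hc₂1
    have hlog3 : (0:ℝ) < Real.log 3 := Real.log_pos (by norm_num)
    set g : ℕ → ℝ := fun m => ((thr c₁ m : ℝ)/m + (thr c₂ m : ℝ)/m - 1)
        * (Real.log 2 / Real.log 3) + (1 - (thr c₂ m : ℝ)/m) with hgdef
    have hg : Filter.Tendsto g Filter.atTop
        (nhds ((2/3 + 2/3 - 1) * (Real.log 2 / Real.log 3) + (1 - 2/3))) := by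
      apply Filter.Tendsto.add
      · exact ((h1.add h2).sub tendsto_const_nhds).mul_const _
      · exact tendsto_const_nhds.sub h2
    have hev : ∀ᶠ m in Filter.atTop,
        g m ≤ Real.log (minDist (BiD m (thr c₁ m) (thr c₂ m))) / Real.log (3^m)
        ∧ Real.log (minDist (BiD m (thr c₁ m) (thr c₂ m))) / Real.log (3^m) ≤ 1 := by
      have hE1 : ∀ᶠ m in Filter.atTop, (7/12 : ℝ) < (thr c₁ m : ℝ)/m :=
        h1.eventually (eventually_gt_nhds (by norm_num))
      filter_upwards [hE1, Filter.eventually_ge_atTop 2] with m hE1m hm2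
      have hmR : (0:ℝ) < m := by exact_mod_cast (by omega : 0 < m)
      have h12 : thr c₁ m ≤ thr c₂ m := thr_mono c₁ c₂ (le_of_lt hc₁₂) (le_of_lt hc₂1) m
      have h2m : thr c₂ m ≤ m := thr_le_self c₂ (le_of_lt hc₂1) m
      have h12R : ((thr c₁ m : ℕ) : ℝ) ≤ ((thr c₂ m : ℕ) : ℝ) := by exact_mod_cast h12
      have hsumR : (m:ℝ) < (thr c₁ m : ℝ) + (thr c₂ m : ℝ) := by
        rw [lt_div_iff₀ hmR] at hE1m
        nlinarith [hE1m, h12R]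
      have hsum : m < thr c₁ m + thr c₂ m := by exact_mod_cast hsumR
      have hD := minDist_BiD_ge m (thr c₁ m) (thr c₂ m) h12 h2m
      have hDle := minDist_BiD_le m (thr c₁ m) (thr c₂ m) h12 h2m
      have hD1 : 0 < 2^(thr c₁ m + thr c₂ m - m) * 3^(m - thr c₂ m) := by positivity
      have hMD1 : 1 ≤ minDist (BiD m (thr c₁ m) (thr c₂ m)) := le_trans hD1 hD
      have hMDpos : (0:ℝ) < (minDist (BiD m (thr c₁ m) (thr c₂ m)) : ℝ) := by
        exact_mod_cast lt_of_lt_of_le Nat.zero_lt_one hMD1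
      have hlog3m : Real.log ((3:ℝ)^m) = m * Real.log 3 := by
        rw [Real.log_pow]
      have hmlogpos : (0:ℝ) < (m:ℝ) * Real.log 3 := by positivity
      constructor
      · -- g ≤ f
        have hlogD : ((thr c₁ m : ℝ) + (thr c₂ m : ℝ) - m) * Real.log 2
            + ((m:ℝ) - (thr c₂ m : ℝ)) * Real.log 3
            ≤ Real.log (minDist (BiD m (thr c₁ m) (thr c₂ m))) := by
          have hle : ((2^(thr c₁ m + thr c₂ m - m) * 3^(m - thr c₂ m) : ℕ) : ℝ)
              ≤ (minDist (BiD m (thr c₁ m) (thr c₂ m)) : ℝ) := by exact_mod_cast hD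
          have hlog := Real.log_le_log (by exact_mod_cast hD1) hle
          have heq : Real.log ((2^(thr c₁ m + thr c₂ m - m) * 3^(m - thr c₂ m) : ℕ) : ℝ)
              = ((thr c₁ m : ℝ) + (thr c₂ m : ℝ) - m) * Real.log 2
                + ((m:ℝ) - (thr c₂ m : ℝ)) * Real.log 3 := by
            push_cast
            rw [Real.log_mul (by positivity) (by positivity), Real.log_pow, Real.log_pow]
            rw [Nat.cast_sub (le_of_lt hsum), Nat.cast_sub h2m]
            push_cast
            ring
          rw [heq] at hlog
          exact hlog
        rw [hlog3m, le_div_iff₀ hmlogpos]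
        have hgeq : g m * ((m:ℝ) * Real.log 3)
            = ((thr c₁ m : ℝ) + (thr c₂ m : ℝ) - m) * Real.log 2
              + ((m:ℝ) - (thr c₂ m : ℝ)) * Real.log 3 := by
          rw [hgdef]
          field_simp
        rw [hgeq]
        exact hlogD
      · -- f ≤ 1
        rw [hlog3m, div_le_one hmlogpos]
        have hle : (minDist (BiD m (thr c₁ m) (thr c₂ m)) : ℝ) ≤ (3:ℝ)^m := by
          exact_mod_cast hDle
        have := Real.log_le_log hMDpos hle
        rw [Real.log_pow] at this
        exact this
    have hliminfg : Filter.liminf g Filter.atTop = Real.log 6 / Real.log 27 := by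
      rw [hg.liminf_eq, log6_log27]
    rw [← hliminfg]
    apply Filter.liminf_le_liminf
    · exact hev.mono (fun m hm => hm.1)
    · exact hg.isBoundedUnder_ge
    · exact Filter.isCoboundedUnder_ge_of_eventually_le Filter.atTop
        (hev.mono (fun m hm => hm.2))
end
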